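/- arXiv:math/9604242 — 3 statements merged into one kernel-verified Lean document; each statement's English description precedes it below -/
import Mathlib

section
/- Let κ < μ < λ be regular cardinals and let A be a first-order structure with countable language on H(λ) containing ∈, a well-ordering of H(λ), and constants for κ and μ, with Skolem functions closed under composition. If B ≺ A, X ⊆ κ, and B' is the Skolem hull of B ∪ X in A, then sup(B' ∩ μ) = sup(B ∩ μ). -/
/- Lemma 2.1: Let κ < μ < λ be regular cardinals and A a structure with countable
language on H(λ) containing ∈, a well-ordering of H(λ), and constants for κ and μ,
with Skolem functions closed under composition.  If B ≺ A, X ⊆ κ and B' is the Skolem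
hull of B ∪ X in A, then sup(B' ∩ μ) = sup(B ∩ μ).

We model the structure on the ordinals below λ (the ordinals of H(λ)); the membership
relation ∈ and the well-ordering ◁ make the ordinal order definable, recorded by a
formula φ defining <, and the constants for κ and μ are recorded as constant symbols
interpreted by (the ordinals) κ and μ.  "Skolem functions closed under composition"
makes the Skolem hull of a set exactly the substructure it generates and makes every
substructure elementary; so sk^A(B ∪ X) is the generated substructure and B ≺ A is
recorded by B being an elementary substructure. -/
open FirstOrder Cardinal Set Ordinal

open Language in
private lemma stmt0_key
    (κ μ lam : Cardinal) (hκ : κ.IsRegular) (hμ : μ.IsRegular)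
    (hκμ : κ < μ) (hμlam : μ < lam)
    (L : Language)
    [L.Structure ↥(Set.Iio lam.ord)]
    (φ : L.Formula (Fin 2))
    (hφ : ∀ a b : ↥(Set.Iio lam.ord), φ.Realize ![a, b] ↔ (a : Ordinal) < (b : Ordinal))
    (cκ cμ : L.Constants)
    (hcκ : ((cκ : ↥(Set.Iio lam.ord)) : Ordinal) = κ.ord)
    (hcμ : ((cμ : ↥(Set.Iio lam.ord)) : Ordinal) = μ.ord)
    (B : L.ElementarySubstructure ↥(Set.Iio lam.ord))
    (X : Set ↥(Set.Iio lam.ord)) (hX : ∀ x ∈ X, (x : Ordinal) < κ.ord)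
    (a : ↥(Set.Iio lam.ord))
    (ha : a ∈ Language.Substructure.closure L ((B : Set ↥(Set.Iio lam.ord)) ∪ X))
    (haμ : (a : Ordinal) < μ.ord) :
    ∃ z : ↥(Set.Iio lam.ord), z ∈ B ∧ (z : Ordinal) < μ.ord ∧ (a : Ordinal) ≤ (z : Ordinal) := by
  classical
  obtain ⟨t, ht⟩ := Substructure.mem_closure_iff_exists_term.1 ha
  let t₁ := t.restrictVar (Set.inclusion (subset_refl (↑t.varFinset)))
  let β : Type _ := ↥(B : Set ↥(Set.Iio lam.ord))
  let γ : Type _ :=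
    {u : (↑t.varFinset : Set ↥((B : Set ↥(Set.Iio lam.ord)) ∪ X)) //
      ((u : ↥((B : Set ↥(Set.Iio lam.ord)) ∪ X)) : ↥(Set.Iio lam.ord)) ∉
        (B : Set ↥(Set.Iio lam.ord))}
  haveI : Finite γ := inferInstance
  let g : (↑t.varFinset : Set ↥((B : Set ↥(Set.Iio lam.ord)) ∪ X)) → β ⊕ γ :=
    fun u => if h : ((u : ↥((B : Set ↥(Set.Iio lam.ord)) ∪ X)) : ↥(Set.Iio lam.ord)) ∈
        (B : Set ↥(Set.Iio lam.ord)) then .inl ⟨_, h⟩ else .inr ⟨u, h⟩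
  let τ : L.Term (β ⊕ γ) := t₁.relabel g
  -- realize fact (1)
  have hτ : ∀ (j : γ → ↥(Set.Iio lam.ord)),
      (∀ c : γ, j c = ((c.1.1 : ↥((B : Set ↥(Set.Iio lam.ord)) ∪ X)) : ↥(Set.Iio lam.ord))) →
      τ.realize (Sum.elim Subtype.val j) = a := by
    intro j hj
    rw [show τ.realize (Sum.elim Subtype.val j)
        = t₁.realize ((Sum.elim Subtype.val j) ∘ g) from Term.realize_relabel]
    rw [show (Sum.elim Subtype.val j) ∘ g
        = (Subtype.val : ↥((B : Set ↥(Set.Iio lam.ord)) ∪ X) → _) ∘ Subtype.val from ?_]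
    · rw [Term.realize_restrictVar' (subset_refl _)]; exact ht
    · funext u
      by_cases h : ((u : ↥((B : Set ↥(Set.Iio lam.ord)) ∪ X)) : ↥(Set.Iio lam.ord)) ∈
          (B : Set ↥(Set.Iio lam.ord))
      · simp only [Function.comp_apply, g, dif_pos h]; rfl
      · simp only [Function.comp_apply, g, dif_neg h]; exact hj ⟨u, h⟩
  haveI : Fintype γ := Fintype.ofFinite γ
  -- helper: realize φ
  have hφ' : ∀ (v : Fin 2 → ↥(Set.Iio lam.ord)),
      φ.Realize v ↔ ((v 0 : Ordinal) < (v 1 : Ordinal)) := by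
    intro v
    have h := hφ (v 0) (v 1)
    rwa [show (![v 0, v 1]) = v from funext fun i => by fin_cases i <;> rfl] at h
  have hφ'' : ∀ (v : Fin 2 → ↥(Set.Iio lam.ord)) (xs : Fin 0 → ↥(Set.Iio lam.ord)),
      BoundedFormula.Realize φ v xs ↔ ((v 0 : Ordinal) < (v 1 : Ordinal)) := fun v xs => by
    rw [Unique.eq_default xs]; exact hφ' v
  -- the formulas
  let τ₂ : L.Term ((β ⊕ Fin 1) ⊕ γ) := τ.relabel (Sum.map Sum.inl id)
  let inner : L.Formula ((β ⊕ Fin 1) ⊕ γ) :=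
    ((BoundedFormula.iInf fun c : γ =>
        φ.subst ![Term.var (Sum.inr c), Constants.term cκ]) ⊓
      φ.subst ![τ₂, Constants.term cμ]) ⟹
    (φ.subst ![Term.var (Sum.inl (Sum.inr 0)), τ₂]).not
  let ψ : L.Formula (β ⊕ Fin 1) :=
    (φ.subst ![Term.var (Sum.inr 0), Constants.term cμ]) ⊓
      inner.iAlls γ
  let Ψ : L.Formula β := ψ.iExs (Fin 1)
  have hψR : ∀ (w : β ⊕ Fin 1 → ↥(Set.Iio lam.ord)), ψ.Realize w ↔
      (((w (Sum.inr 0) : Ordinal) < μ.ord) ∧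
       ∀ j : γ → ↥(Set.Iio lam.ord), (∀ c, ((j c : Ordinal) < κ.ord)) →
         (((τ.realize (Sum.elim (fun b => w (Sum.inl b)) j) : ↥(Set.Iio lam.ord)) : Ordinal) < μ.ord) →
         ¬ ((w (Sum.inr 0) : Ordinal) <
            ((τ.realize (Sum.elim (fun b => w (Sum.inl b)) j) : ↥(Set.Iio lam.ord)) : Ordinal))) := by
    intro w
    simp only [ψ, inner, τ₂, Formula.Realize,
      BoundedFormula.realize_iInf, BoundedFormula.realize_inf,
      BoundedFormula.realize_imp, BoundedFormula.realize_not,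
      BoundedFormula.realize_subst, BoundedFormula.realize_iAlls,
      Term.realize_var, Term.realize_constants, Term.realize_relabel, hφ'',
      Matrix.cons_val_zero, Matrix.cons_val_one, Matrix.head_cons,
      Finset.mem_univ, forall_true_left, true_implies, hcκ, hcμ, id_eq]
    have hcomp : ∀ (w : β ⊕ Fin 1 → ↥(Set.Iio lam.ord)) (j : γ → ↥(Set.Iio lam.ord)),
        ((fun a => Sum.elim w j a) ∘ Sum.map Sum.inl id)
          = Sum.elim (fun b => w (Sum.inl b)) j :=
      fun w j => funext fun u => by cases u <;> rfl
    constructor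
    · rintro ⟨h1, h2⟩
      refine ⟨h1, fun j hj hτμ => ?_⟩
      have h3 := h2 j
      rw [hcomp] at h3
      exact h3 ⟨fun c => hj c, hτμ⟩
    · rintro ⟨h1, h2⟩
      refine ⟨h1, fun j => ?_⟩
      rw [hcomp]
      rintro ⟨hjκ, hjμ⟩
      exact h2 j (fun c => hjκ c) hjμ
  -- ordinal facts
  have hkm : κ.ord < μ.ord := Cardinal.ord_lt_ord.2 hκμ
  have hml : μ.ord < lam.ord := Cardinal.ord_lt_ord.2 hμlam
  have hkl : κ.ord < lam.ord := hkm.trans hml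
  have hμpos : (0 : Ordinal) < μ.ord := by
    rw [← Cardinal.ord_zero]
    exact Cardinal.ord_lt_ord.2 hμ.pos
  -- the sup
  let n := Fintype.card γ
  let e : γ ≃ Fin n := Fintype.equivFin γ
  let decode : (Fin n → κ.ord.ToType) → (γ → ↥(Set.Iio lam.ord)) := fun p c =>
    ⟨(((Ordinal.ToType.mk (o := κ.ord)).symm (p (e c))) : Ordinal),
      Set.mem_Iio.2 (lt_trans ((Ordinal.ToType.mk (o := κ.ord)).symm (p (e c))).2 hkl)⟩
  let F : (Fin n → κ.ord.ToType) → Ordinal := fun p =>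
    if ((τ.realize (Sum.elim Subtype.val (decode p)) : ↥(Set.Iio lam.ord)) : Ordinal) < μ.ord
    then ((τ.realize (Sum.elim Subtype.val (decode p)) : ↥(Set.Iio lam.ord)) : Ordinal) else 0
  have hF : ∀ p, F p < μ.ord := by
    intro p
    by_cases h : ((τ.realize (Sum.elim Subtype.val (decode p)) : ↥(Set.Iio lam.ord)) : Ordinal) < μ.ord
    · simpa [F, if_pos h] using h
    · simpa [F, if_neg h] using hμpos
  have hbdd : BddAbove (Set.range F) := ⟨μ.ord, by rintro _ ⟨p, rfl⟩; exact (hF p).le⟩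
  have hcount : #(Fin n → κ.ord.ToType) < μ := by
    have h1 : #(Fin n → κ.ord.ToType) = κ ^ (n : Cardinal) := by
      simp [Cardinal.mk_arrow, mk_toType, Cardinal.card_ord, Cardinal.lift_id',
        Cardinal.lift_natCast]
    rw [h1, Cardinal.power_natCast]
    exact lt_of_le_of_lt (Cardinal.power_nat_le hκ.aleph0_le) hκμ
  have hsup : (⨆ p, F p) < μ.ord := Cardinal.iSup_lt_ord_of_isRegular hμ hcount hF
  let zM : ↥(Set.Iio lam.ord) := ⟨⨆ p, F p, Set.mem_Iio.2 (hsup.trans hml)⟩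
  -- Step 1 : Ψ is realized in the big structure
  have hΨM : Ψ.Realize (Subtype.val : β → ↥(Set.Iio lam.ord)) := by
    rw [show Ψ = ψ.iExs (Fin 1) from rfl, Formula.realize_iExs]
    refine ⟨fun _ : Fin 1 => zM, ?_⟩
    have hfun : (fun a : β ⊕ Fin 1 => Sum.elim (Subtype.val : β → ↥(Set.Iio lam.ord))
        (fun _ : Fin 1 => zM) (id a)) = Sum.elim Subtype.val (fun _ : Fin 1 => zM) :=
      funext fun u => by cases u <;> rfl
    rw [hψR]
    refine ⟨hsup, fun j hj hjμ => ?_⟩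
    -- translate j into an index
    let p : Fin n → κ.ord.ToType := fun i =>
      Ordinal.ToType.mk (o := κ.ord) ⟨(j (e.symm i) : Ordinal), Set.mem_Iio.2 (hj _)⟩
    have hdec : decode p = j := by
      funext c
      apply Subtype.ext
      show (((Ordinal.ToType.mk (o := κ.ord)).symm (p (e c))) : Ordinal) = (j c : Ordinal)
      simp only [p, Equiv.symm_apply_apply, OrderIso.symm_apply_apply]
    have hsub : (fun b : β => Sum.elim (Subtype.val : β → ↥(Set.Iio lam.ord))
        (fun _ : Fin 1 => zM) (Sum.inl b)) = (Subtype.val : β → ↥(Set.Iio lam.ord)) := rfl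
    rw [hsub] at hjμ ⊢
    have hFp : F p = ((τ.realize (Sum.elim Subtype.val j) : ↥(Set.Iio lam.ord)) : Ordinal) := by
      simp only [F, hdec, if_pos hjμ]
    have hle : ((τ.realize (Sum.elim Subtype.val j) : ↥(Set.Iio lam.ord)) : Ordinal)
        ≤ (⨆ p, F p) := by
      rw [← hFp]
      exact le_ciSup hbdd p
    exact not_lt.2 hle
  -- Step 2 : transfer to B and back
  have hcoe : (⇑B.subtype ∘ (fun b : β => (⟨(b : ↥(Set.Iio lam.ord)), b.2⟩ : B)))
      = (Subtype.val : β → ↥(Set.Iio lam.ord)) := rfl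
  have hΨB : Ψ.Realize (fun b : β => (⟨(b : ↥(Set.Iio lam.ord)), b.2⟩ : B)) := by
    rw [← B.subtype.map_formula Ψ, hcoe]
    exact hΨM
  rw [show Ψ = ψ.iExs (Fin 1) from rfl, Formula.realize_iExs] at hΨB
  obtain ⟨i, hi⟩ := hΨB
  have hiM : ψ.Realize (⇑B.subtype ∘
      (fun a : β ⊕ Fin 1 => Sum.elim (fun b : β => (⟨(b : ↥(Set.Iio lam.ord)), b.2⟩ : B)) i (id a))) :=
    (B.subtype.map_formula ψ _).2 hi
  have hw : (⇑B.subtype ∘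
      (fun a : β ⊕ Fin 1 => Sum.elim (fun b : β => (⟨(b : ↥(Set.Iio lam.ord)), b.2⟩ : B)) i (id a)))
      = Sum.elim (Subtype.val : β → ↥(Set.Iio lam.ord)) (fun k => (i k : ↥(Set.Iio lam.ord))) :=
    funext fun u => by cases u <;> rfl
  rw [hw, hψR] at hiM
  obtain ⟨hzμ, hbound⟩ := hiM
  -- instantiate with the X-variables
  let j : γ → ↥(Set.Iio lam.ord) := fun c => ((c.1.1 : ↥((B : Set ↥(Set.Iio lam.ord)) ∪ X)) : ↥(Set.Iio lam.ord))
  have hjX : ∀ c : γ, ((j c : ↥(Set.Iio lam.ord)) : Ordinal) < κ.ord := by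
    intro c
    have hmem : (c.1.1 : ↥(Set.Iio lam.ord)) ∈ (B : Set ↥(Set.Iio lam.ord)) ∪ X := c.1.1.2
    exact hX _ (hmem.resolve_left c.2)
  have hτa : τ.realize (Sum.elim (Subtype.val : β → ↥(Set.Iio lam.ord)) j) = a :=
    hτ j (fun c => rfl)
  have hsub2 : (fun b : β => Sum.elim (Subtype.val : β → ↥(Set.Iio lam.ord))
      (fun k => (i k : ↥(Set.Iio lam.ord))) (Sum.inl b)) = (Subtype.val : β → ↥(Set.Iio lam.ord)) := rfl
  have hfin := hbound j hjX
  rw [hsub2, hτa] at hfin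
  refine ⟨(i 0 : ↥(Set.Iio lam.ord)), (i 0).2, ?_, ?_⟩
  · exact hzμ
  · exact not_lt.1 (hfin haμ)

theorem stmt_0
    (κ μ lam : Cardinal) (hκ : κ.IsRegular) (hμ : μ.IsRegular) (hlam : lam.IsRegular)
    (hκμ : κ < μ) (hμlam : μ < lam)
    (L : Language) [Countable (Σ n, L.Functions n)] [Countable (Σ n, L.Relations n)]
    [L.Structure ↥(Set.Iio lam.ord)]
    -- skolemization: every substructure (i.e. Skolem hull) is elementary
    (hskolem : ∀ S : L.Substructure ↥(Set.Iio lam.ord), S.IsElementary)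
    -- the ordinal order (definable from ∈ / the well-ordering ◁) is definable
    (φ : L.Formula (Fin 2))
    (hφ : ∀ a b : ↥(Set.Iio lam.ord),
        φ.Realize ![a, b] ↔ (a : Ordinal) < (b : Ordinal))
    -- constants for κ and μ
    (cκ cμ : L.Constants)
    (hcκ : ((cκ : ↥(Set.Iio lam.ord)) : Ordinal) = κ.ord)
    (hcμ : ((cμ : ↥(Set.Iio lam.ord)) : Ordinal) = μ.ord)
    (B : L.ElementarySubstructure ↥(Set.Iio lam.ord))
    (X : Set ↥(Set.Iio lam.ord)) (hX : ∀ x ∈ X, (x : Ordinal) < κ.ord) :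
    sSup {o : Ordinal | o < μ.ord ∧ ∃ h : o ∈ Set.Iio lam.ord,
        (⟨o, h⟩ : ↥(Set.Iio lam.ord)) ∈
          Language.Substructure.closure L ((B : Set ↥(Set.Iio lam.ord)) ∪ X)}
      = sSup {o : Ordinal | o < μ.ord ∧ ∃ h : o ∈ Set.Iio lam.ord,
          (⟨o, h⟩ : ↥(Set.Iio lam.ord)) ∈ B} := by
  classical
  have key := stmt0_key κ μ lam hκ hμ hκμ hμlam L φ hφ cκ cμ hcκ hcμ B X hX
  have hub : ∀ (T : Set Ordinal), (∀ x ∈ T, x < μ.ord) → μ.ord ∈ upperBounds T :=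
    fun T hT x hx => (hT x hx).le
  apply le_antisymm
  · apply csSup_le'
    rintro o ⟨hoμ, h, homem⟩
    obtain ⟨z, hzB, hzμ, hle⟩ := key ⟨o, h⟩ homem hoμ
    refine le_trans hle (le_csSup ⟨μ.ord, hub _ fun x hx => hx.1⟩ ⟨hzμ, z.2, ?_⟩)
    exact hzB
  · apply csSup_le'
    rintro o ⟨hoμ, h, homem⟩
    refine le_csSup ⟨μ.ord, hub _ fun x hx => hx.1⟩ ⟨hoμ, h, ?_⟩
    exact Language.Substructure.subset_closure (Set.mem_union_left _ homem)
end

section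
/- Let n* < ω, X ⊆ ω \ (n*+1), f : X → n*+1, and suppose n*₁ > n* and f₁ : X → n*₁+1 agrees with f on X \ (n*₁+1). If S_f = { x ⊆ ℵ_ω : |x| ≤ ℵ_{n*} ∧ (∀n∈X) cf(x∩ℵ_n)=ℵ_{f(n)} } is stationary in [ℵ_ω]^{<ℵ_{n*+1}}, then S_{f₁} = { x ⊆ ℵ_ω : |x| ≤ ℵ_{n*₁} ∧ (∀n∈X, n > n*₁) cf(x∩ℵ_n)=ℵ_{f₁(n)} } is stationary in [ℵ_ω]^{<ℵ_{n*₁+1}}. -/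
/- Finite variation: Let n* < ω, X ⊆ ω \ (n*+1), f : X → n*+1, n*₁ > n*, and
f₁ : X → n*₁+1 agreeing with f on X \ (n*₁+1).  If
S_f = { x ⊆ ℵ_ω : |x| ≤ ℵ_{n*} ∧ (∀ n ∈ X) cf(x ∩ ℵ_n) = ℵ_{f(n)} } is stationary in
[ℵ_ω]^{<ℵ_{n*+1}}, then
S_{f₁} = { x ⊆ ℵ_ω : |x| ≤ ℵ_{n*₁} ∧ (∀ n ∈ X, n > n*₁) cf(x ∩ ℵ_n) = ℵ_{f₁(n)} }
is stationary in [ℵ_ω]^{<ℵ_{n*₁+1}}. -/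
open Cardinal Set Ordinal

noncomputable def alephOmegaOrd : Ordinal.{0} := (Cardinal.aleph Ordinal.omega0).ord

noncomputable def cofBelow (x : Set Ordinal.{0}) (a : Ordinal.{0}) : Cardinal.{0} :=
  (sSup (x ∩ Set.Iio a)).cof

/-- the set of x ⊆ ℵ_ω with |x| ≤ ℵ_k and cf(x ∩ ℵ_n) = ℵ_{g n} for all n ∈ Y -/
noncomputable def SfGen (k : ℕ) (Y : Set ℕ) (g : ℕ → ℕ) : Set (Set Ordinal.{0}) :=
  {x | x ⊆ Set.Iio alephOmegaOrd ∧
    Cardinal.mk x ≤ Cardinal.lift.{1,0} (Cardinal.aleph k) ∧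
    ∀ n ∈ Y, cofBelow x (Cardinal.aleph n).ord = Cardinal.aleph (g n)}

def IsClubFam (C : Set (Set Ordinal.{0})) (lam : Ordinal.{0}) (mu : Cardinal.{0}) : Prop :=
  (∀ x ∈ C, x ⊆ Set.Iio lam ∧ Cardinal.mk x < Cardinal.lift.{1,0} mu) ∧
  (∀ x : Set Ordinal.{0}, x ⊆ Set.Iio lam → Cardinal.mk x < Cardinal.lift.{1,0} mu →
      ∃ y ∈ C, x ⊆ y) ∧
  (∀ D : Set (Set Ordinal.{0}), D ⊆ C → D.Nonempty → IsChain (· ⊆ ·) D →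
      Cardinal.mk D < Cardinal.lift.{1,0} mu → ⋃₀ D ∈ C)

def IsStatFam (S : Set (Set Ordinal.{0})) (lam : Ordinal.{0}) (mu : Cardinal.{0}) : Prop :=
  ∀ C : Set (Set Ordinal.{0}), IsClubFam C lam mu → (S ∩ C).Nonempty

set_option maxHeartbeats 2000000

noncomputable def hullG (Φ : Set Ordinal.{0} → Set Ordinal.{0}) (e : Finset Ordinal.{0}) : Set Ordinal.{0} :=
  Φ ((↑e : Set Ordinal.{0}) ∪ ⋃ e' ∈ e.powerset.erase e, hullG Φ e')
termination_by e.card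
decreasing_by
  rename_i h
  have h1 := Finset.mem_erase.1 h
  exact Finset.card_lt_card (lt_of_le_of_ne (Finset.mem_powerset.1 h1.2) h1.1)

theorem subset_hullG (Φ : Set Ordinal.{0} → Set Ordinal.{0}) (hΦ : ∀ z, z ⊆ Φ z)
    (e : Finset Ordinal.{0}) : (↑e : Set Ordinal.{0}) ⊆ hullG Φ e := by
  rw [hullG]
  exact subset_trans subset_union_left (hΦ _)

theorem hullG_mono (Φ : Set Ordinal.{0} → Set Ordinal.{0}) (hΦ : ∀ z, z ⊆ Φ z)
    {e₁ e₂ : Finset Ordinal.{0}} (h : e₁ ⊆ e₂) : hullG Φ e₁ ⊆ hullG Φ e₂ := by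
  rcases eq_or_ne e₁ e₂ with rfl | hne
  · exact subset_rfl
  · conv_rhs => rw [hullG]
    refine subset_trans ?_ (hΦ _)
    refine subset_trans ?_ subset_union_right
    exact subset_iUnion₂ (s := fun e' _ => hullG Φ e') e₁
      (Finset.mem_erase.2 ⟨hne, Finset.mem_powerset.2 h⟩)

theorem finset_subset_chain_union {α : Type*} {D : Set (Set α)} (hD : IsChain (· ⊆ ·) D)
    (hne : D.Nonempty) {e : Finset α} (he : ↑e ⊆ ⋃₀ D) : ∃ d ∈ D, ↑e ⊆ d := by
  classical
  induction e using Finset.induction_on with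
  | empty => exact hne.imp fun d hd => ⟨hd, by simp⟩
  | insert _ _ ha ih =>
    rename_i a e
    obtain ⟨d1, hd1, hed1⟩ := ih (subset_trans (by exact_mod_cast Finset.subset_insert a e) he)
    obtain ⟨d2, hd2, had2⟩ := he (by simp : a ∈ (↑(insert a e) : Set α))
    obtain ⟨d3, hd3, h13, h23⟩ := hD.directedOn d1 hd1 d2 hd2
    refine ⟨d3, hd3, ?_⟩
    intro b hb
    rcases Finset.mem_insert.1 (by exact_mod_cast hb) with rfl | hbe
    · exact h23 had2
    · exact h13 (hed1 hbe)

theorem mk_finset_subsets_le (w : Set Ordinal.{0}) :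
    #{e : Finset Ordinal.{0} | ↑e ⊆ w} ≤ max ℵ₀ #w := by
  classical
  have key : ∀ (l : List Ordinal.{0}) (H : ∀ a ∈ l, a ∈ w),
      (List.pmap (fun a (h : a ∈ w) => (⟨a, h⟩ : ↥w)) l H).map Subtype.val = l := by
    intro l H
    simp [List.map_pmap]
  let F : {e : Finset Ordinal.{0} | ↑e ⊆ w} → List ↥w := fun e =>
    List.pmap (fun a (h : a ∈ w) => (⟨a, h⟩ : ↥w)) (e.1.sort (· ≤ ·))
      (fun a ha => e.2 (Finset.mem_coe.2 ((Finset.mem_sort _).1 ha)))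
  have hF : Function.Injective F := by
    intro e1 e2 h
    have h2 : e1.1.sort (· ≤ ·) = e2.1.sort (· ≤ ·) := by
      have := congrArg (List.map Subtype.val) h
      rwa [key, key] at this
    have h3 := congrArg List.toFinset h2
    rwa [Finset.sort_toFinset, Finset.sort_toFinset, ← Subtype.ext_iff] at h3
  exact (Cardinal.mk_le_of_injective hF).trans (Cardinal.mk_list_le_max _)

theorem sSup_lt_ord_of_small {s : Set Ordinal.{0}} {c : Cardinal.{0}} (hc : c.IsRegular)
    (hs : #s < Cardinal.lift.{1, 0} c) (hb : ∀ a ∈ s, a < c.ord) : sSup s < c.ord := by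
  rcases s.eq_empty_or_nonempty with rfl | hne
  · rw [csSup_empty]
    have hω : ω ≤ c.ord := by
      rw [← Cardinal.ord_aleph0]
      exact Cardinal.ord_le_ord.2 hc.aleph0_le
    exact lt_of_lt_of_le Ordinal.omega0_pos hω
  · obtain ⟨c', hc', hlift⟩ := Cardinal.lt_lift_iff.1 hs
    have hmk : #(ULift.{1, 0} c'.out) = #(↥s) := by rw [mk_uLift, mk_out, hlift]
    obtain ⟨E⟩ := Cardinal.eq.1 hmk
    have hrange : Set.range (fun i : c'.out => ((E ⟨i⟩ : ↥s) : Ordinal.{0})) = s := by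
      ext b
      constructor
      · rintro ⟨i, rfl⟩; exact (E ⟨i⟩).2
      · intro hbs
        refine ⟨(E.symm ⟨b, hbs⟩).down, ?_⟩
        show ((E ⟨(E.symm ⟨b, hbs⟩).down⟩ : ↥s) : Ordinal.{0}) = b
        rw [show (⟨(E.symm ⟨b, hbs⟩).down⟩ : ULift.{1,0} (Quotient.out c')) = E.symm ⟨b, hbs⟩ from rfl,
          E.apply_symm_apply]
    have hsup : sSup s = ⨆ i : c'.out, ((E ⟨i⟩ : ↥s) : Ordinal.{0}) := by
      rw [iSup, hrange]
    rw [hsup]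
    refine Ordinal.iSup_lt_ord ?_ fun i => hb _ (E ⟨i⟩).2
    rw [mk_out, hc.cof_eq]
    exact hc'

theorem stmt_9 (nstar nstar1 : ℕ) (X : Set ℕ) (hX : ∀ n ∈ X, nstar + 1 ≤ n)
    (f f1 : ℕ → ℕ) (hf : ∀ n ∈ X, f n ≤ nstar) (hf1 : ∀ n ∈ X, f1 n ≤ nstar1)
    (h1 : nstar < nstar1)
    (hagree : ∀ n ∈ X, nstar1 + 1 ≤ n → f1 n = f n)
    (hstat : IsStatFam (SfGen nstar X f) alephOmegaOrd (Cardinal.aleph (nstar + 1))) :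
    IsStatFam (SfGen nstar1 {n ∈ X | nstar1 < n} f1) alephOmegaOrd
      (Cardinal.aleph (nstar1 + 1)) := by
  classical
  intro C hC
  obtain ⟨hCmem, hCext, hCchain⟩ := hC
  have hlift0 : ∀ o : Ordinal.{0}, (ℵ₀ : Cardinal.{1}) ≤ Cardinal.lift.{1,0} (aleph o) := by
    intro o
    have h := Cardinal.lift_le.2 (aleph0_le_aleph o)
    rwa [Cardinal.lift_aleph0] at h
  have hsucc_le : ∀ (m : ℕ) (κ : Cardinal.{1}),
      κ < Cardinal.lift.{1,0} (aleph ((m : Ordinal) + 1)) → κ ≤ Cardinal.lift.{1,0} (aleph m) := by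
    intro m κ h
    rw [Ordinal.add_one_eq_succ, aleph_succ, Cardinal.lift_succ] at h
    exact Order.lt_succ_iff.1 h
  have hordlt : ∀ n : ℕ, (aleph n).ord < alephOmegaOrd := by
    intro n
    exact Cardinal.ord_lt_ord.2 (Cardinal.aleph_lt_aleph.2 (Ordinal.nat_lt_omega0 n))
  -- choice function producing members of C
  have hPhiEx : ∀ z : Set Ordinal.{0}, ∃ y : Set Ordinal.{0}, z ⊆ y ∧
      ((z ⊆ Set.Iio alephOmegaOrd ∧ #z < Cardinal.lift.{1,0} (aleph (nstar1+1))) → y ∈ C) := by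
    intro z
    by_cases h : z ⊆ Set.Iio alephOmegaOrd ∧ #z < Cardinal.lift.{1,0} (aleph (nstar1+1))
    · obtain ⟨y, hy, hzy⟩ := hCext z h.1 h.2
      exact ⟨y, hzy, fun _ => hy⟩
    · exact ⟨z, subset_rfl, fun h' => absurd h' h⟩
  choose Φ hΦsub hΦmem using hPhiEx
  -- hulls of finite sets are in C
  have biUnion_small : ∀ fs : Finset (Finset Ordinal.{0}),
      (∀ e' ∈ fs, hullG Φ e' ∈ C) →
      #(⋃ e' ∈ fs, hullG Φ e' : Set Ordinal.{0}) < Cardinal.lift.{1,0} (aleph (nstar1+1)) := by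
    intro fs
    induction fs using Finset.induction_on with
    | empty =>
      intro _
      simp only [Finset.notMem_empty, iUnion_of_empty, iUnion_empty]
      rw [Cardinal.mk_emptyCollection]
      exact lt_of_lt_of_le Cardinal.aleph0_pos (hlift0 _)
    | insert _ _ ha ih =>
      rename_i a fs
      intro hmem
      rw [Finset.set_biUnion_insert]
      refine lt_of_le_of_lt (Cardinal.mk_union_le _ _)
        (Cardinal.add_lt_of_lt (hlift0 _) ?_ (ih fun e' he' => hmem e' (Finset.mem_insert_of_mem he')))
      exact (hCmem _ (hmem a (Finset.mem_insert_self a fs))).2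
  have hstep : ∀ e : Finset Ordinal.{0}, ↑e ⊆ Set.Iio alephOmegaOrd →
      (∀ e' : Finset Ordinal.{0}, e' ⊂ e → hullG Φ e' ∈ C) → hullG Φ e ∈ C := by
    intro e he hsub
    rw [hullG]
    apply hΦmem
    have hmem' : ∀ e' ∈ e.powerset.erase e, hullG Φ e' ∈ C := by
      intro e' h'
      have h1 := Finset.mem_erase.1 h'
      exact hsub e' (lt_of_le_of_ne (Finset.mem_powerset.1 h1.2) h1.1)
    constructor
    · apply union_subset he
      exact iUnion₂_subset fun e' h' => (hCmem _ (hmem' e' h')).1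
    · refine lt_of_le_of_lt (Cardinal.mk_union_le _ _)
        (Cardinal.add_lt_of_lt (hlift0 _) ?_ (biUnion_small _ hmem'))
      exact lt_of_lt_of_le (e.finite_toSet.lt_aleph0) (hlift0 _)
  have hullC : ∀ e : Finset Ordinal.{0}, ↑e ⊆ Set.Iio alephOmegaOrd → hullG Φ e ∈ C := by
    have key : ∀ (n : ℕ) (e : Finset Ordinal.{0}), e.card ≤ n →
        ↑e ⊆ Set.Iio alephOmegaOrd → hullG Φ e ∈ C := by
      intro n
      induction n with
      | zero =>
        intro e hc he
        apply hstep e he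
        intro e' he'
        exfalso
        rw [Nat.le_zero, Finset.card_eq_zero] at hc
        subst hc
        exact Finset.not_ssubset_empty e' he'
      | succ n ih =>
        intro e hc he
        refine hstep e he fun e' he' => ih e' ?_ (subset_trans ?_ he)
        · have := Finset.card_lt_card he'; omega
        · exact_mod_cast he'.subset
    exact fun e => key e.card e le_rfl
  -- the sup functions
  obtain ⟨σ, hσdef⟩ : ∃ σ : ℕ → Finset Ordinal.{0} → Ordinal.{0},
      ∀ n e, σ n e = sSup (hullG Φ e ∩ Set.Iio (aleph (n : ℕ)).ord) := ⟨_, fun _ _ => rfl⟩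
  have hσlam : ∀ (n : ℕ) (e : Finset Ordinal.{0}), σ n e < alephOmegaOrd := by
    intro n e
    rw [hσdef]
    refine lt_of_le_of_lt (csSup_le' ?_) (hordlt n)
    exact fun a ha => le_of_lt ha.2
  have hσlt : ∀ (n : ℕ) (e : Finset Ordinal.{0}), nstar1 + 1 ≤ n →
      ↑e ⊆ Set.Iio alephOmegaOrd → σ n e < (aleph n).ord := by
    intro n e hn he
    obtain ⟨m, rfl⟩ : ∃ m, n = m + 1 := ⟨n - 1, by omega⟩
    have hreg : (aleph ((m + 1 : ℕ) : Ordinal)).IsRegular := by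
      have hcast : ((m + 1 : ℕ) : Ordinal) = Order.succ (m : Ordinal) := by
        push_cast
        rw [Ordinal.add_one_eq_succ]
      rw [hcast]
      exact isRegular_aleph_succ _
    rw [hσdef]
    refine sSup_lt_ord_of_small hreg ?_ fun a ha => ha.2
    refine lt_of_le_of_lt (mk_le_mk_of_subset inter_subset_left) ?_
    refine lt_of_lt_of_le (hCmem _ (hullC e he)).2 (Cardinal.lift_le.2 (aleph_le_aleph.2 ?_))
    exact_mod_cast hn
  -- auxiliary cardinal helpers
  have hmulle : ∀ c : Cardinal.{1}, c ≤ Cardinal.lift.{1,0} (aleph nstar) →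
      ℵ₀ * c ≤ Cardinal.lift.{1,0} (aleph nstar) := by
    intro c hc
    exact le_trans (Cardinal.mul_le_max _ _) (max_le (max_le (hlift0 _) hc) (hlift0 _))
  -- the small club family
  have hclub : IsClubFam
      {z : Set Ordinal.{0} | z ⊆ Set.Iio alephOmegaOrd ∧ #z ≤ Cardinal.lift.{1,0} (aleph nstar) ∧
        ∀ n ∈ X, nstar1 < n → ∀ e : Finset Ordinal.{0}, ↑e ⊆ z → σ n e ∈ z}
      alephOmegaOrd (aleph (nstar + 1)) := by
    refine ⟨?_, ?_, ?_⟩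
    · rintro z ⟨hz1, hz2, -⟩
      refine ⟨hz1, lt_of_le_of_lt hz2 (Cardinal.lift_lt.2 (aleph_lt_aleph.2 ?_))⟩
      exact_mod_cast Nat.lt_succ_self nstar
    · -- extension
      intro z hz1 hz2
      have hz2' := hsucc_le nstar _ hz2
      set F : Set Ordinal.{0} → Set Ordinal.{0} := fun w =>
        w ∪ (fun p : ℕ × Finset Ordinal.{0} => σ p.1 p.2) ''
          {p : ℕ × Finset Ordinal.{0} | p.1 ∈ X ∧ nstar1 < p.1 ∧ ↑p.2 ⊆ w} with hFdef
      have hFsub : ∀ w, w ⊆ F w := fun w => subset_union_left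
      have hFlam : ∀ w, w ⊆ Set.Iio alephOmegaOrd → F w ⊆ Set.Iio alephOmegaOrd := by
        intro w hw
        apply union_subset hw
        rintro b ⟨p, -, rfl⟩
        exact hσlam p.1 p.2
      have hFsize : ∀ w : Set Ordinal.{0}, #w ≤ Cardinal.lift.{1,0} (aleph nstar) →
          #(F w) ≤ Cardinal.lift.{1,0} (aleph nstar) := by
        intro w hw
        refine le_trans (Cardinal.mk_union_le _ _) (Cardinal.add_le_of_le (hlift0 _) hw ?_)
        refine le_trans Cardinal.mk_image_le ?_
        have inj : Function.Injective
            (fun q : {p : ℕ × Finset Ordinal.{0} | p.1 ∈ X ∧ nstar1 < p.1 ∧ ↑p.2 ⊆ w} =>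
              ((q.1.1 : ℕ), (⟨q.1.2, q.2.2.2⟩ : {e : Finset Ordinal.{0} | ↑e ⊆ w}))) := by
          rintro ⟨⟨n1, e1⟩, h1⟩ ⟨⟨n2, e2⟩, h2⟩ hq
          simp only [Prod.mk.injEq, Subtype.mk.injEq] at hq
          exact Subtype.ext (Prod.ext hq.1 hq.2)
        refine le_trans (Cardinal.mk_le_of_injective inj) ?_
        rw [Cardinal.mk_prod, Cardinal.mk_nat, Cardinal.lift_aleph0, Cardinal.lift_id']
        refine hmulle _ (le_trans (mk_finset_subsets_le w) (max_le (hlift0 _) hw))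
      have hgmono' : ∀ k, F^[k] z ⊆ F^[k+1] z := by
        intro k
        rw [Function.iterate_succ_apply']
        exact hFsub _
      have hgmono : ∀ k l, k ≤ l → F^[k] z ⊆ F^[l] z := by
        intro k l hkl
        induction l with
        | zero => simp_all
        | succ l ih =>
          rcases Nat.lt_or_ge k (l+1) with h | h
          · exact subset_trans (ih (by omega)) (hgmono' l)
          · have : k = l + 1 := by omega
            subst this; exact subset_rfl
      have hchain : IsChain (· ⊆ ·) (Set.range fun k : ℕ => F^[k] z) := by
        rintro _ ⟨k, rfl⟩ _ ⟨l, rfl⟩ -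
        rcases le_total k l with h | h
        · exact Or.inl (hgmono k l h)
        · exact Or.inr (hgmono l k h)
      have hglam : ∀ k, F^[k] z ⊆ Set.Iio alephOmegaOrd := by
        intro k
        induction k with
        | zero => simpa using hz1
        | succ k ih => rw [Function.iterate_succ_apply']; exact hFlam _ ih
      have hgsize : ∀ k, #(F^[k] z) ≤ Cardinal.lift.{1,0} (aleph nstar) := by
        intro k
        induction k with
        | zero => simpa using hz2'
        | succ k ih => rw [Function.iterate_succ_apply']; exact hFsize _ ih
      refine ⟨⋃₀ Set.range (fun k : ℕ => F^[k] z), ⟨?_, ?_, ?_⟩, ?_⟩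
      · exact sUnion_subset (by rintro _ ⟨k, rfl⟩; exact hglam k)
      · refine le_trans (Cardinal.mk_sUnion_le _) ?_
        haveI : Nonempty ↥(Set.range fun k : ℕ => F^[k] z) := ⟨⟨z, 0, rfl⟩⟩
        have h2 : ⨆ s : (Set.range fun k : ℕ => F^[k] z), #(s : Set Ordinal.{0}) ≤
            Cardinal.lift.{1,0} (aleph nstar) := by
          refine ciSup_le ?_
          rintro ⟨s, k, rfl⟩
          exact hgsize k
        have h1 : #(Set.range fun k : ℕ => F^[k] z) ≤ ℵ₀ := by
          haveI := (Set.countable_range fun k : ℕ => F^[k] z).to_subtype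
          exact Cardinal.mk_le_aleph0
        exact le_trans (mul_le_mul' h1 h2) (hmulle _ le_rfl)
      · intro n hn hn1 e he
        obtain ⟨d, ⟨k, rfl⟩, hed⟩ := finset_subset_chain_union hchain ⟨z, 0, rfl⟩ he
        have : σ n e ∈ F (F^[k] z) := Or.inr ⟨(n, e), ⟨hn, hn1, hed⟩, rfl⟩
        rw [← Function.iterate_succ_apply' F k z] at this
        exact ⟨F^[k+1] z, ⟨k+1, rfl⟩, this⟩
      · exact subset_sUnion_of_subset _ z subset_rfl ⟨0, rfl⟩
    · -- chain closure
      intro D hD hne hchain hDsize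
      have hDsize' := hsucc_le nstar _ hDsize
      refine ⟨sUnion_subset fun d hd => (hD hd).1, ?_, ?_⟩
      · refine le_trans (Cardinal.mk_sUnion_le _) ?_
        haveI : Nonempty ↥D := hne.to_subtype
        have h2 : ⨆ s : D, #(s : Set Ordinal.{0}) ≤ Cardinal.lift.{1,0} (aleph nstar) :=
          ciSup_le fun s => (hD s.2).2.1
        refine le_trans (mul_le_mul' hDsize' h2) ?_
        rw [← Cardinal.lift_mul, Cardinal.mul_eq_self (aleph0_le_aleph _)]
      · intro n hn hn1 e he
        obtain ⟨d, hdD, hed⟩ := finset_subset_chain_union hchain hne he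
        exact ⟨d, hdD, (hD hdD).2.2 n hn hn1 e hed⟩
  obtain ⟨x, hxS, hxC0⟩ := hstat _ hclub
  obtain ⟨hx1, hx2, hx3⟩ := hxS
  obtain ⟨-, -, hxσ⟩ := hxC0
  -- the enlargement y
  have TC : ∀ (β : Ordinal.{0}) (s : Finset Ordinal.{0}), ↑s ⊆ Set.Iio alephOmegaOrd →
      (⋃ e ∈ {e : Finset Ordinal.{0} | ↑e ⊆ x ∩ Set.Iio β}, hullG Φ (e ∪ s)) ∈ C := by
    intro β
    induction β using Ordinal.induction with
    | _ β IH =>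
      intro s hs
      rcases eq_empty_or_nonempty (x ∩ Set.Iio β) with hemp | hnon
      · have heq : (⋃ e ∈ {e : Finset Ordinal.{0} | ↑e ⊆ x ∩ Set.Iio β}, hullG Φ (e ∪ s))
            = hullG Φ s := by
          apply subset_antisymm
          · refine iUnion₂_subset fun e he => ?_
            have he' : e = ∅ := by
              rw [← Finset.coe_eq_empty]
              rw [hemp] at he
              exact subset_empty_iff.1 he
            subst he'
            rw [Finset.empty_union]
          · have h0 : (↑(∅ : Finset Ordinal.{0}) : Set Ordinal.{0}) ⊆ x ∩ Set.Iio β := by simp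
            have h2 := subset_iUnion₂
              (s := fun (e : Finset Ordinal.{0}) (_ : ↑e ⊆ x ∩ Set.Iio β) => hullG Φ (e ∪ s)) ∅ h0
            rwa [Finset.empty_union] at h2
        rw [heq]
        exact hullC s hs
      · by_cases hmax : ∃ a ∈ x ∩ Set.Iio β, ∀ b ∈ x ∩ Set.Iio β, b ≤ a
        · obtain ⟨a, ha, hamax⟩ := hmax
          have heq : (⋃ e ∈ {e : Finset Ordinal.{0} | ↑e ⊆ x ∩ Set.Iio β}, hullG Φ (e ∪ s)) =
              ⋃ e ∈ {e : Finset Ordinal.{0} | ↑e ⊆ x ∩ Set.Iio a}, hullG Φ (e ∪ insert a s) := by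
            apply subset_antisymm
            · refine iUnion₂_subset fun e he => ?_
              have hsub : ↑(e.erase a) ⊆ x ∩ Set.Iio a := by
                intro b hb
                obtain ⟨hbne, hbe⟩ := Finset.mem_erase.1 (by exact_mod_cast hb)
                have hbx := he (Finset.mem_coe.2 hbe)
                exact ⟨hbx.1, lt_of_le_of_ne (hamax b hbx) hbne⟩
              refine subset_trans (hullG_mono Φ hΦsub ?_)
                (subset_iUnion₂ (s := fun (e : Finset Ordinal.{0}) (_ : ↑e ⊆ x ∩ Set.Iio a) =>
                  hullG Φ (e ∪ insert a s)) (e.erase a) hsub)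
              intro b hb
              rcases Finset.mem_union.1 hb with hbe | hbs
              · rcases eq_or_ne b a with rfl | hba
                · exact Finset.mem_union.2 (Or.inr (Finset.mem_insert_self _ _))
                · exact Finset.mem_union.2 (Or.inl (Finset.mem_erase.2 ⟨hba, hbe⟩))
              · exact Finset.mem_union.2 (Or.inr (Finset.mem_insert.2 (Or.inr hbs)))
            · refine iUnion₂_subset fun e he => ?_
              have heq2 : e ∪ insert a s = insert a e ∪ s := by
                ext b
                simp only [Finset.mem_union, Finset.mem_insert]
                tauto
              rw [heq2]
              refine subset_iUnion₂ (s := fun (e : Finset Ordinal.{0}) (_ : ↑e ⊆ x ∩ Set.Iio β) =>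
                hullG Φ (e ∪ s)) (insert a e) ?_
              intro b hb
              rcases Finset.mem_insert.1 (by exact_mod_cast hb) with rfl | hbe
              · exact ha
              · have hb2 := he (Finset.mem_coe.2 hbe)
                exact ⟨hb2.1, Set.mem_Iio.2 (lt_trans (Set.mem_Iio.1 hb2.2) (Set.mem_Iio.1 ha.2))⟩
          rw [heq]
          refine IH a ha.2 (insert a s) ?_
          intro b hb
          rcases Finset.mem_insert.1 (by exact_mod_cast hb) with rfl | hbs
          · exact hx1 ha.1
          · exact hs (Finset.mem_coe.2 hbs)
        · push_neg at hmax
          have Tmono : ∀ a b : Ordinal.{0}, a ≤ b →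
              (⋃ e ∈ {e : Finset Ordinal.{0} | ↑e ⊆ x ∩ Set.Iio a}, hullG Φ (e ∪ s)) ⊆
              ⋃ e ∈ {e : Finset Ordinal.{0} | ↑e ⊆ x ∩ Set.Iio b}, hullG Φ (e ∪ s) := by
            intro a b hab
            refine iUnion₂_subset fun e he => subset_iUnion₂
              (s := fun (e : Finset Ordinal.{0}) (_ : ↑e ⊆ x ∩ Set.Iio b) => hullG Φ (e ∪ s)) e
              fun c hc => ⟨(he hc).1, lt_of_lt_of_le (he hc).2 hab⟩
          have heq : (⋃ e ∈ {e : Finset Ordinal.{0} | ↑e ⊆ x ∩ Set.Iio β}, hullG Φ (e ∪ s)) =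
              ⋃₀ ((fun a => ⋃ e ∈ {e : Finset Ordinal.{0} | ↑e ⊆ x ∩ Set.Iio a},
                hullG Φ (e ∪ s)) '' (x ∩ Set.Iio β)) := by
            apply subset_antisymm
            · refine iUnion₂_subset fun e he => ?_
              rcases Finset.eq_empty_or_nonempty e with rfl | hene
              · obtain ⟨a0, ha0⟩ := hnon
                refine subset_trans (subset_iUnion₂
                  (s := fun (e : Finset Ordinal.{0}) (_ : ↑e ⊆ x ∩ Set.Iio a0) =>
                    hullG Φ (e ∪ s)) ∅ (by simp)) (subset_sUnion_of_mem ⟨a0, ha0, rfl⟩)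
              · have hae : e.max' hene ∈ e := e.max'_mem hene
                have hax := he (Finset.mem_coe.2 hae)
                obtain ⟨b, hbx, hab⟩ := hmax _ hax
                have hesub : ↑e ⊆ x ∩ Set.Iio b := by
                  intro c hc
                  have hcx := he hc
                  exact ⟨hcx.1, lt_of_le_of_lt (e.le_max' c (Finset.mem_coe.1 hc)) hab⟩
                exact subset_trans (subset_iUnion₂
                  (s := fun (e : Finset Ordinal.{0}) (_ : ↑e ⊆ x ∩ Set.Iio b) =>
                    hullG Φ (e ∪ s)) e hesub) (subset_sUnion_of_mem ⟨b, hbx, rfl⟩)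
            · refine sUnion_subset ?_
              rintro _ ⟨a, haxb, rfl⟩
              exact Tmono a β (le_of_lt haxb.2)
          rw [heq]
          apply hCchain
          · rintro _ ⟨a, haxb, rfl⟩
            exact IH a haxb.2 s hs
          · exact hnon.image _
          · rintro _ ⟨a, ha, rfl⟩ _ ⟨b, hb, rfl⟩ -
            rcases le_total a b with h | h
            · exact Or.inl (Tmono a b h)
            · exact Or.inr (Tmono b a h)
          · refine lt_of_le_of_lt Cardinal.mk_image_le ?_
            refine lt_of_le_of_lt (mk_le_mk_of_subset inter_subset_left) ?_
            refine lt_of_le_of_lt hx2 (Cardinal.lift_lt.2 (aleph_lt_aleph.2 ?_))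
            exact_mod_cast (by omega : nstar < nstar1 + 1)
  have hyC : (⋃ e ∈ {e : Finset Ordinal.{0} | ↑e ⊆ x}, hullG Φ e) ∈ C := by
    have h := TC alephOmegaOrd ∅ (by simp)
    have heq : (⋃ e ∈ {e : Finset Ordinal.{0} | ↑e ⊆ x ∩ Set.Iio alephOmegaOrd},
        hullG Φ (e ∪ ∅)) = ⋃ e ∈ {e : Finset Ordinal.{0} | ↑e ⊆ x}, hullG Φ e := by
      rw [inter_eq_self_of_subset_left hx1]
      simp [Finset.union_empty]
    rwa [heq] at h
  refine ⟨_, ?_, hyC⟩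
  obtain ⟨hy1, hy2⟩ := hCmem _ hyC
  refine ⟨hy1, hsucc_le nstar1 _ hy2, ?_⟩
  rintro n ⟨hnX, hn1⟩
  have hxy : x ⊆ ⋃ e ∈ {e : Finset Ordinal.{0} | ↑e ⊆ x}, hullG Φ e := by
    intro b hb
    refine mem_iUnion₂.2 ⟨{b}, by simpa using hb, ?_⟩
    exact subset_hullG Φ hΦsub {b} (by simp)
  have hbdd : ∀ w : Set Ordinal.{0}, BddAbove (w ∩ Set.Iio (aleph (n : ℕ)).ord) :=
    fun w => ⟨(aleph (n : ℕ)).ord, fun a ha => le_of_lt ha.2⟩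
  have hsupeq : sSup ((⋃ e ∈ {e : Finset Ordinal.{0} | ↑e ⊆ x}, hullG Φ e) ∩
      Set.Iio (aleph (n : ℕ)).ord) = sSup (x ∩ Set.Iio (aleph (n : ℕ)).ord) := by
    apply le_antisymm
    · apply csSup_le'
      rintro b ⟨hby, hblt⟩
      obtain ⟨e, he, hbe⟩ := mem_iUnion₂.1 hby
      have hb1 : b ≤ σ n e := by
        rw [hσdef]
        exact le_csSup (hbdd _) ⟨hbe, hblt⟩
      have hb2 : σ n e ∈ x := hxσ n hnX hn1 e he
      have hb3 : σ n e < (aleph (n : ℕ)).ord := hσlt n e (by omega) (subset_trans he hx1)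
      exact le_trans hb1 (le_csSup (hbdd x) ⟨hb2, hb3⟩)
    · apply csSup_le'
      rintro b ⟨hbx, hblt⟩
      exact le_csSup (hbdd _) ⟨hxy hbx, hblt⟩
  show cofBelow _ _ = _
  unfold cofBelow
  rw [hsupeq]
  have hfx := hx3 n hnX
  unfold cofBelow at hfx
  rw [hagree n hnX (by omega)]
  exact hfx
end

section
/- Let λ be a successor of a regular cardinal, λ = μ⁺ with μ regular uncountable, and let κ < μ be a regular uncountable cardinal. Then there exists a sequence ⟨C_α : α < λ⟩ such that: (1) C_α ⊆ α and the order type of C_α is ≤ κ; (2) if β ∈ C_α then C_β = C_α ∩ β; (3) the set {α < λ : cf(α) = κ and α = sup(C_α)} is stationary in λ. -/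
/- Lemma 3.1 (for successors of regulars): let λ = μ⁺ with μ regular uncountable and
κ < μ regular uncountable.  Then there is ⟨C_α : α < λ⟩ with:
(1) C_α ⊆ α and otp(C_α) ≤ κ; (2) β ∈ C_α → C_β = C_α ∩ β;
(3) {α < λ : cf(α) = κ ∧ α = sup C_α} is stationary in λ.  (The C_α need not be closed.) -/
open Cardinal Set Ordinal

/-- `Cl` is closed unbounded in the ordinal `lam`. -/
def IsClubIn (Cl : Set Ordinal.{0}) (lam : Ordinal.{0}) : Prop :=
  Cl ⊆ Set.Iio lam ∧ (∀ β < lam, ∃ γ ∈ Cl, β < γ) ∧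
    ∀ s ⊆ Cl, s.Nonempty → sSup s < lam → sSup s ∈ Cl

def IsStatIn (S : Set Ordinal.{0}) (lam : Ordinal.{0}) : Prop :=
  ∀ Cl : Set Ordinal.{0}, IsClubIn Cl lam → (S ∩ Cl).Nonempty

open Classical
noncomputable section
set_option linter.deprecated false
set_option linter.unusedVariables false
set_option maxHeartbeats 1000000



/-- order type (collapse position) of `A ∩ Iio γ`. -/
def posIn (A : Set Ordinal.{0}) : Ordinal.{0} → Ordinal.{0} :=
  lt_wf.fix (fun γ rec => Ordinal.bsup.{0,0} γ (fun x hx => if x ∈ A then rec x hx + 1 else 0))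

theorem posIn_def (A : Set Ordinal.{0}) (γ : Ordinal.{0}) :
    posIn A γ = Ordinal.bsup.{0,0} γ (fun x _ => if x ∈ A then posIn A x + 1 else 0) := by
  rw [posIn, WellFounded.fix_eq]

theorem posIn_lt_posIn {A : Set Ordinal.{0}} {γ β : Ordinal.{0}} (hγ : γ ∈ A) (h : γ < β) :
    posIn A γ < posIn A β := by
  conv_rhs => rw [posIn_def]
  have := Ordinal.le_bsup (fun x (_ : x < β) => if x ∈ A then posIn A x + 1 else 0) γ h
  simp only [hγ, if_true] at this
  exact (Order.lt_succ _ : posIn A γ < posIn A γ + 1).trans_le this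

theorem posIn_mono (A : Set Ordinal.{0}) {γ β : Ordinal.{0}} (h : γ ≤ β) :
    posIn A γ ≤ posIn A β := by
  rw [posIn_def, posIn_def]
  exact Ordinal.bsup_le fun i hi => Ordinal.le_bsup _ i (hi.trans_le h)

theorem posIn_congr {A B : Set Ordinal.{0}} {β : Ordinal.{0}}
    (hAB : A ∩ Iio β = B ∩ Iio β) : ∀ γ ≤ β, posIn A γ = posIn B γ := by
  intro γ hγ
  induction γ using Ordinal.induction with
  | h γ ih =>
    rw [posIn_def, posIn_def]
    congr 1
    funext x hx
    have hxβ : x < β := hx.trans_le hγ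
    have hmem : x ∈ A ↔ x ∈ B := by
      constructor
      · intro h; have : x ∈ A ∩ Iio β := ⟨h, hxβ⟩; rw [hAB] at this; exact this.1
      · intro h; have : x ∈ B ∩ Iio β := ⟨h, hxβ⟩; rw [← hAB] at this; exact this.1
    by_cases hx' : x ∈ A
    · simp [hx', hmem.mp hx', ih x hx (le_of_lt hxβ)]
    · have : x ∉ B := fun h => hx' (hmem.mpr h)
      simp [hx', this]

theorem posIn_realize {A : Set Ordinal.{0}} {β q : Ordinal.{0}} (h : q < posIn A β) :
    ∃ γ, γ ∈ A ∧ γ < β ∧ posIn A γ = q := by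
  induction β using Ordinal.induction generalizing q with
  | h β ih =>
    rw [posIn_def] at h
    obtain ⟨x, hx, hq⟩ := (Ordinal.lt_bsup _).mp h
    by_cases hxA : x ∈ A
    · simp only [hxA, if_true] at hq
      rcases lt_or_eq_of_le (Order.lt_succ_iff.mp hq) with h' | h'
      · obtain ⟨γ, h1, h2, h3⟩ := ih x hx h'
        exact ⟨γ, h1, h2.trans hx, h3⟩
      · exact ⟨x, hxA, hx, h'.symm⟩
    · simp only [hxA, if_false] at hq
      exact absurd hq (not_lt_zero : ¬ q < 0)

/-- comparison: a strictly monotone ordinal map on `A ∩ Iio β` with values `< o` bounds `posIn`. -/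
theorem posIn_le_of_mono {A : Set Ordinal.{0}} {β o : Ordinal.{0}} (g : Ordinal.{0} → Ordinal.{0})
    (hmono : ∀ x ∈ A, ∀ y ∈ A, x < y → y < β → g x < g y)
    (hbd : ∀ x ∈ A, x < β → g x < o) : posIn A β ≤ o := by
  have key : ∀ x, x ∈ A → x < β → posIn A x ≤ g x := by
    intro x
    induction x using Ordinal.induction with
    | h x ih =>
      intro hxA hxβ
      rw [posIn_def]
      apply Ordinal.bsup_le
      intro y hy
      by_cases hyA : y ∈ A
      · simp only [hyA, if_true]
        have h1 : posIn A y ≤ g y := ih y hy hyA (hy.trans hxβ)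
        have h2 : g y < g x := hmono y hyA x hxA hy hxβ
        exact (Order.add_one_le_iff).mpr (h1.trans_lt h2)
      · simp only [hyA, if_false]
        exact zero_le
  rw [posIn_def]
  apply Ordinal.bsup_le
  intro y hy
  by_cases hyA : y ∈ A
  · simp only [hyA, if_true]
    exact (Order.add_one_le_iff).mpr ((key y hyA hy).trans_lt (hbd y hyA hy))
  · simpa [hyA] using (zero_le : 0 ≤ o)

theorem posIn_lt_ord {A : Set Ordinal.{0}} {β : Ordinal.{0}} {c : Cardinal.{0}}
    (hc : #(↥(A ∩ Iio β)) < Cardinal.lift.{1,0} c) : posIn A β < c.ord := by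
  by_contra hle
  push_neg at hle
  -- c.ord ≤ posIn A β : build injection Iio c.ord → A ∩ Iio β
  have inj : ∀ q : Iio c.ord, ∃ γ, γ ∈ A ∧ γ < β ∧ posIn A γ = q.1 := by
    intro q
    exact posIn_realize (lt_of_lt_of_le q.2 hle)
  choose f hf1 hf2 hf3 using inj
  have hinj : Function.Injective (fun q : Iio c.ord => (⟨f q, hf1 q, hf2 q⟩ : ↥(A ∩ Iio β))) := by
    intro a b hab
    simp only [Subtype.mk.injEq] at hab
    have : posIn A (f a) = posIn A (f b) := congrArg (posIn A) (congrArg Subtype.val hab)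
    rw [hf3 a, hf3 b] at this
    exact Subtype.ext this
  have := Cardinal.mk_le_of_injective hinj
  rw [Ordinal.mk_Iio_ordinal, Cardinal.card_ord] at this
  exact absurd (this.trans_lt hc) (lt_irrefl _)



/-- image of `Iio J` under `e α`. -/
def Eim (e : Ordinal.{0} → Ordinal.{0} → Ordinal.{0}) (J α : Ordinal.{0}) : Set Ordinal.{0} :=
  (e α) '' (Iio J)

def Zs (e : Ordinal.{0} → Ordinal.{0} → Ordinal.{0}) (J α : Ordinal.{0}) : Set Ordinal.{0} :=
  {γ | γ < α ∧ ∀ b < γ, ∃ x ∈ Eim e J α ∩ Iio γ, b < x}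

def Ms (e : Ordinal.{0} → Ordinal.{0} → Ordinal.{0}) (J α : Ordinal.{0}) : Set Ordinal.{0} :=
  {γ | 0 < γ ∧ γ < α ∧ Eim e J α ∩ Iio γ = Eim e J γ}

def Ps (e : Ordinal.{0} → Ordinal.{0} → Ordinal.{0}) (J α : Ordinal.{0}) : Set Ordinal.{0} :=
  Ms e J α ∩ Zs e J α

def Cs (e : Ordinal.{0} → Ordinal.{0} → Ordinal.{0}) (J : Ordinal.{0}) (X : Set Ordinal.{0})
    (α : Ordinal.{0}) : Set Ordinal.{0} :=
  {γ | γ ∈ Ps e J α ∧ posIn (Ps e J α) γ ∈ X}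

variable {e : Ordinal.{0} → Ordinal.{0} → Ordinal.{0}} {J α β : Ordinal.{0}}

theorem Ps_subset_Iio : Ps e J α ⊆ Iio α := fun _ h => h.1.2.1

theorem Eim_inter (hβ : β ∈ Ms e J α) {γ : Ordinal.{0}} (hγ : γ ≤ β) :
    Eim e J α ∩ Iio γ = Eim e J β ∩ Iio γ := by
  have h := hβ.2.2
  ext x
  constructor
  · rintro ⟨h1, h2⟩
    have : x ∈ Eim e J α ∩ Iio β := ⟨h1, lt_of_lt_of_le h2 hγ⟩
    rw [h] at this
    exact ⟨this, h2⟩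
  · rintro ⟨h1, h2⟩
    have : x ∈ Eim e J α ∩ Iio β := by rw [h]; exact h1
    exact ⟨this.1, h2⟩

theorem Ps_inter (hβ : β ∈ Ms e J α) : Ps e J α ∩ Iio β = Ps e J β := by
  have hβα : β < α := hβ.2.1
  ext γ
  constructor
  · rintro ⟨⟨hM, hZ⟩, (hγβ : γ < β)⟩
    refine ⟨⟨hM.1, hγβ, ?_⟩, hγβ, ?_⟩
    · rw [← hM.2.2, ← Eim_inter hβ hγβ.le]
    · intro b hb
      obtain ⟨x, hx1, hx2⟩ := hZ.2 b hb
      have : x ∈ Eim e J β ∩ Iio γ := by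
        rw [← Eim_inter hβ hγβ.le]; exact hx1
      exact ⟨x, this, hx2⟩
  · rintro ⟨hM, hZ⟩
    have hγβ : γ < β := hM.2.1
    refine ⟨⟨⟨hM.1, hγβ.trans hβα, ?_⟩, hγβ.trans hβα, ?_⟩, hγβ⟩
    · rw [Eim_inter hβ hγβ.le, hM.2.2]
    · intro b hb
      obtain ⟨x, hx1, hx2⟩ := hZ.2 b hb
      have : x ∈ Eim e J α ∩ Iio γ := by
        rw [Eim_inter hβ hγβ.le]; exact hx1
      exact ⟨x, this, hx2⟩

theorem Cs_coherent {X : Set Ordinal.{0}} (hβ : β ∈ Cs e J X α) :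
    Cs e J X β = Cs e J X α ∩ Iio β := by
  have hβM : β ∈ Ms e J α := hβ.1.1
  have hP : Ps e J α ∩ Iio β = Ps e J β := Ps_inter hβM
  have hpos : ∀ γ ≤ β, posIn (Ps e J α) γ = posIn (Ps e J β) γ := by
    apply posIn_congr
    rw [hP]
    exact (Set.inter_eq_left.mpr Ps_subset_Iio).symm
  ext γ
  constructor
  · rintro ⟨hγP, hγX⟩
    have hγβ : γ < β := hγP.2.1
    have : γ ∈ Ps e J α := by rw [← hP] at hγP; exact hγP.1
    exact ⟨⟨this, by rwa [hpos γ hγβ.le]⟩, hγβ⟩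
  · rintro ⟨⟨hγP, hγX⟩, (hγβ : γ < β)⟩
    have hmem : γ ∈ Ps e J β := by rw [← hP]; exact ⟨hγP, hγβ⟩
    exact ⟨hmem, by rwa [← hpos γ hγβ.le]⟩



theorem isClubIn_Iio {lam : Ordinal.{0}} (h : Order.IsSuccLimit lam) : IsClubIn (Iio lam) lam :=
  ⟨fun _ hx => hx, fun β hβ => ⟨β + 1, by rw [Ordinal.add_one_eq_succ]; exact h.succ_lt hβ, lt_of_lt_of_le (Order.lt_succ β) (by rw [Ordinal.add_one_eq_succ])⟩, fun _ _ _ h => h⟩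

/-- cofinality of the sup of a strictly monotone chain of length `κ.ord`. -/
theorem cof_chain_eq {κ : Cardinal.{0}} (hκ : κ.IsRegular) (z : Ordinal.{0} → Ordinal.{0})
    (hmono : ∀ i < κ.ord, ∀ j < κ.ord, i < j → z i < z j) :
    (Ordinal.bsup.{0,0} κ.ord (fun i _ => z i)).cof = κ := by
  have hklim : Order.IsSuccLimit κ.ord := Cardinal.isSuccLimit_ord hκ.aleph0_le
  set p := Ordinal.bsup.{0,0} κ.ord (fun i _ => z i) with hp
  have hzp : ∀ i < κ.ord, z i < p := by
    intro i hi
    have hi1 : i + 1 < κ.ord := by rw [Ordinal.add_one_eq_succ]; exact hklim.succ_lt hi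
    exact lt_of_lt_of_le (hmono i hi (i+1) hi1 ((Order.lt_succ i).trans_le (by rw [Ordinal.add_one_eq_succ])))
      (Ordinal.le_bsup (fun i _ => z i) (i+1) hi1)
  apply le_antisymm
  · have := Ordinal.cof_bsup_le (f := fun (i : Ordinal) (_ : i < κ.ord) => z i)
      (fun i h => hzp i h)
    rwa [Cardinal.card_ord] at this
  · -- κ ≤ cof p
    rw [← Ordinal.cof_toType, Order.le_cof_iff]
    intro S hUnb
    by_contra hlt
    push_neg at hlt
    -- map each s ∈ S to an index
    have hos : ∀ s : p.ToType, ∃ i < κ.ord, ((Ordinal.ToType.mk (o := p)).symm s : Iio p).1 < z i := by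
      intro s
      have h2 : (((Ordinal.ToType.mk (o := p)).symm s : Iio p) : Ordinal) < p := ((Ordinal.ToType.mk (o := p)).symm s).2
      obtain ⟨i, hi, h⟩ := (Ordinal.lt_bsup _).mp (lt_of_lt_of_le h2 (le_of_eq hp))
      exact ⟨i, hi, h⟩
    choose idx hidx1 hidx2 using hos
    have hsup : (⨆ s : ↥S, idx s.1) < κ.ord := by
      apply Ordinal.iSup_lt_ord
      · rwa [hκ.cof_eq]
      · exact fun s => hidx1 s.1
    obtain ⟨i₀, hi₀k, hsup'⟩ : ∃ i₀ < κ.ord, ∀ s : ↥S, idx s.1 ≤ i₀ :=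
      ⟨_, hsup, fun s => Ordinal.le_iSup _ s⟩
    -- unboundedness of S gives an element above z i₀
    obtain ⟨s, hsS, hns⟩ := hUnb ((Ordinal.ToType.mk (o := p)) ⟨z i₀, hzp i₀ hi₀k⟩)
    have hos' : z i₀ ≤ ((Ordinal.ToType.mk (o := p)).symm s : Iio p).1 := by
      exact (Ordinal.ToType.mk (o := p)).le_symm_apply.mpr hns
    have h1 : z i₀ < z (idx s) := lt_of_le_of_lt hos' (hidx2 s)
    have h2 : idx s ≤ i₀ := hsup' ⟨s, hsS⟩
    have : z (idx s) ≤ z i₀ := by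
      rcases lt_or_eq_of_le h2 with h | h
      · exact (hmono (idx s) (hidx1 s) i₀ hi₀k h).le
      · rw [h]
    exact absurd (h1.trans_le this) (lt_irrefl _)




theorem succ_lt_of_limit {lam a : Ordinal.{0}} (h : Order.IsSuccLimit lam) (ha : a < lam) : a + 1 < lam := by
  rw [Ordinal.add_one_eq_succ]; exact h.succ_lt ha

theorem lt_add_one_self (a : Ordinal.{0}) : a < a + 1 := by
  rw [Ordinal.add_one_eq_succ]; exact Order.lt_succ a

/-- In every club there is a point of cofinality κ. -/
theorem exists_cof_point {κ : Cardinal.{0}} {lam : Ordinal.{0}} (hκ : κ.IsRegular)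
    (hlim : Order.IsSuccLimit lam) (hcof : κ < lam.cof) {Cl : Set Ordinal.{0}} (hCl : IsClubIn Cl lam) :
    ∃ p ∈ Cl, p < lam ∧ p.cof = κ := by
  have hklim : Order.IsSuccLimit κ.ord := Cardinal.isSuccLimit_ord hκ.aleph0_le
  have hpick : ∀ b < lam, ∃ γ ∈ Cl, b < γ := hCl.2.1
  set z : Ordinal.{0} → Ordinal.{0} := lt_wf.fix
    (fun i rec => if h : (Ordinal.bsup.{0,0} i (fun j hj => rec j hj + 1) < lam)
      then Classical.choose (hpick _ h) else 0) with hz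
  have hzdef : ∀ i, z i = if h : (Ordinal.bsup.{0,0} i (fun j _ => z j + 1) < lam)
      then Classical.choose (hpick _ h) else 0 := by
    intro i
    conv_lhs => rw [hz, WellFounded.fix_eq]
  have key : ∀ i < κ.ord, z i ∈ Cl ∧
      Ordinal.bsup.{0,0} i (fun j _ => z j + 1) < z i ∧ z i < lam := by
    intro i
    induction i using Ordinal.induction with
    | h i ih =>
      intro hik
      have hb : Ordinal.bsup.{0,0} i (fun j _ => z j + 1) < lam := by
        apply Ordinal.bsup_lt_ord
        · exact (Cardinal.lt_ord.mp hik).trans hcof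
        · intro j hj
          exact succ_lt_of_limit hlim (ih j hj (hj.trans hik)).2.2
      have hspec := Classical.choose_spec (hpick _ hb)
      have hzi : z i = Classical.choose (hpick _ hb) := by rw [hzdef i, dif_pos hb]
      exact ⟨by rw [hzi]; exact hspec.1, by rw [hzi]; exact hspec.2,
        by rw [hzi]; exact hCl.1 hspec.1⟩
  have hmono : ∀ i < κ.ord, ∀ j < κ.ord, i < j → z i < z j := by
    intro i hi j hj hij
    have h1 : z i + 1 ≤ Ordinal.bsup.{0,0} j (fun j' _ => z j' + 1) :=
      Ordinal.le_bsup (fun j' (_ : j' < j) => z j' + 1) i hij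
    exact lt_of_lt_of_le ((lt_add_one_self (z i)).trans_le h1) (key j hj).2.1.le
  set p := Ordinal.bsup.{0,0} κ.ord (fun i _ => z i) with hp
  have hplam : p < lam := by
    rw [hp]
    apply Ordinal.bsup_lt_ord
    · rw [Cardinal.card_ord]; exact hcof
    · exact fun i hi => (key i hi).2.2
  have hpCl : p ∈ Cl := by
    have hsub : Ordinal.brange κ.ord (fun i (_ : i < κ.ord) => z i) ⊆ Cl := by
      rintro x ⟨i, hi, rfl⟩
      exact (key i hi).1
    have hne : (Ordinal.brange κ.ord (fun i (_ : i < κ.ord) => z i)).Nonempty :=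
      ⟨z 0, 0, hklim.pos, rfl⟩
    have hss := Ordinal.sSup_eq_bsup.{0,0} (fun i (_ : i < κ.ord) => z i)
    have := hCl.2.2 _ hsub hne (by rw [hss]; exact hplam)
    rwa [hss] at this
  exact ⟨p, hpCl, hplam, cof_chain_eq hκ z hmono⟩

/-- intersection of club sets indexed below `m` is club. -/
theorem isClubIn_inter {lam m : Ordinal.{0}} (hlim : Order.IsSuccLimit lam) (hm : m.card < lam.cof)
    (hℵ : ℵ₀ < lam.cof) (E : Ordinal.{0} → Set Ordinal.{0}) (hE : ∀ v < m, IsClubIn (E v) lam) :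
    IsClubIn {x | x < lam ∧ ∀ v < m, x ∈ E v} lam := by
  refine ⟨fun x hx => hx.1, ?_, ?_⟩
  · -- unbounded
    intro β hβ
    have hpick : ∀ v < m, ∀ b < lam, ∃ γ ∈ E v, b < γ := fun v hv => (hE v hv).2.1
    have step : ∀ b < lam, ∃ b' < lam, b < b' ∧ ∀ v < m, ∃ γ ∈ E v, b < γ ∧ γ ≤ b' := by
      intro b hb
      have hbsup : Ordinal.bsup.{0,0} m (fun v hv => Classical.choose (hpick v hv b hb)) < lam :=
        Ordinal.bsup_lt_ord hm
          (fun v hv => (hE v hv).1 (Classical.choose_spec (hpick v hv b hb)).1)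
      refine ⟨max (b+1) (Ordinal.bsup.{0,0} m (fun v hv => Classical.choose (hpick v hv b hb))),
        max_lt (succ_lt_of_limit hlim hb) hbsup,
        (lt_add_one_self b).trans_le (le_max_left _ _), ?_⟩
      intro v hv
      obtain ⟨h1, h2⟩ := Classical.choose_spec (hpick v hv b hb)
      exact ⟨_, h1, h2, le_trans (Ordinal.le_bsup _ v hv) (le_max_right _ _)⟩
    set x : ℕ → Ordinal.{0} := fun n => Nat.rec (β + 1) (fun _ b =>
      if hb : b < lam then Classical.choose (step b hb) else 0) n with hxdef
    have hxs : ∀ n, x (n+1) = if hb : x n < lam then Classical.choose (step (x n) hb) else 0 :=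
      fun n => rfl
    have hxlam : ∀ n, x n < lam := by
      intro n
      induction n with
      | zero => exact succ_lt_of_limit hlim hβ
      | succ n ih =>
        rw [hxs n, dif_pos ih]
        exact (Classical.choose_spec (step (x n) ih)).1
    have hxspec : ∀ n, x n < x (n+1) ∧ ∀ v < m, ∃ γ ∈ E v, x n < γ ∧ γ ≤ x (n+1) := by
      intro n
      have h := (Classical.choose_spec (step (x n) (hxlam n))).2
      rw [hxs n, dif_pos (hxlam n)]
      exact h
    set q := (⨆ n, x n) with hq
    have hqlam : q < lam := by
      rw [hq]
      apply Ordinal.iSup_lt_ord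
      · rw [Cardinal.mk_nat]; exact hℵ
      · exact hxlam
    have hβq : β < q := by
      have : x 0 ≤ q := Ordinal.le_iSup x 0
      exact lt_of_lt_of_le (lt_add_one_self β) this
    refine ⟨q, ⟨hqlam, ?_⟩, hβq⟩
    intro v hv
    -- the chosen witnesses for v converge to q
    have hw : ∀ n, ∃ γ ∈ E v, x n < γ ∧ γ ≤ x (n+1) := fun n => (hxspec n).2 v hv
    set w : ℕ → Ordinal.{0} := fun n => Classical.choose (hw n) with hwdef
    have hwspec : ∀ n, w n ∈ E v ∧ x n < w n ∧ w n ≤ x (n+1) :=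
      fun n => ⟨(Classical.choose_spec (hw n)).1, (Classical.choose_spec (hw n)).2.1,
        (Classical.choose_spec (hw n)).2.2⟩
    have hsub : Set.range w ⊆ E v := by rintro y ⟨n, rfl⟩; exact (hwspec n).1
    have hbdd : BddAbove (Set.range w) := by
      refine ⟨q, ?_⟩
      rintro y ⟨n, rfl⟩
      exact le_trans (hwspec n).2.2 (Ordinal.le_iSup x (n+1))
    have hsupw : sSup (Set.range w) = q := by
      apply le_antisymm
      · apply csSup_le (⟨w 0, 0, rfl⟩ : (Set.range w).Nonempty)
        rintro y ⟨n, rfl⟩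
        exact le_trans (hwspec n).2.2 (Ordinal.le_iSup x (n+1))
      · rw [hq]
        apply Ordinal.iSup_le
        intro n
        exact le_trans (hwspec n).2.1.le (le_csSup hbdd ⟨n, rfl⟩)
    have := (hE v hv).2.2 (Set.range w) hsub ⟨w 0, 0, rfl⟩ (by rw [hsupw]; exact hqlam)
    rwa [hsupw] at this
  · -- closed
    intro s hs hne hsup
    exact ⟨hsup, fun v hv => (hE v hv).2.2 s (fun y hy => (hs hy).2 v hv) hne hsup⟩

/-- pigeonhole for stationary sets. -/
theorem stat_pigeon {lam m : Ordinal.{0}} (hlim : Order.IsSuccLimit lam) (hm : m.card < lam.cof)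
    (hℵ : ℵ₀ < lam.cof) {T : Set Ordinal.{0}} (hT : IsStatIn T lam)
    (F : Ordinal.{0} → Ordinal.{0}) (hF : ∀ δ ∈ T, F δ < m) :
    ∃ v < m, IsStatIn {δ | δ ∈ T ∧ F δ = v} lam := by
  by_contra hcon
  push_neg at hcon
  have hcl : ∀ v < m, ∃ Cl, IsClubIn Cl lam ∧ {δ | δ ∈ T ∧ F δ = v} ∩ Cl = ∅ := by
    intro v hv
    obtain ⟨Cl, hCl⟩ := not_forall.mp (hcon v hv)
    rw [Classical.not_imp] at hCl
    exact ⟨Cl, hCl.1, Set.not_nonempty_iff_eq_empty.mp hCl.2⟩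
  set E : Ordinal.{0} → Set Ordinal.{0} := fun v =>
    if hv : v < m then Classical.choose (hcl v hv) else Iio lam with hEdef
  have hE : ∀ v < m, IsClubIn (E v) lam := by
    intro v hv
    have : E v = Classical.choose (hcl v hv) := by rw [hEdef]; exact dif_pos hv
    rw [this]
    exact (Classical.choose_spec (hcl v hv)).1
  obtain ⟨δ, ⟨hδT, hδI⟩⟩ := hT _ (isClubIn_inter hlim hm hℵ E hE)
  have hFδ : F δ < m := hF δ hδT
  have hEv : E (F δ) = Classical.choose (hcl (F δ) hFδ) := by rw [hEdef]; exact dif_pos hFδ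
  have : δ ∈ {δ | δ ∈ T ∧ F δ = F δ} ∩ Classical.choose (hcl (F δ) hFδ) := by
    refine ⟨⟨hδT, rfl⟩, ?_⟩
    have := hδI.2 (F δ) hFδ
    rwa [hEv] at this
  exact Set.eq_empty_iff_forall_notMem.mp (Classical.choose_spec (hcl (F δ) hFδ)).2 δ this

theorem exists_surj_onto {m β : Ordinal.{0}} (h : β.card ≤ m.card) (hβ : 0 < β) :
    ∃ f : Ordinal.{0} → Ordinal.{0}, (∀ j, f j < β) ∧ ∀ x < β, ∃ j < m, f j = x := by
  have hmk : #β.ToType ≤ #m.ToType := by rw [Cardinal.mk_toType, Cardinal.mk_toType]; exact h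
  obtain ⟨ι⟩ := Cardinal.le_def _ _ |>.mp hmk
  haveI : Nonempty β.ToType := Ordinal.nonempty_toType_iff.mpr hβ.ne'
  have hg : Function.Surjective (Function.invFun ι) := Function.invFun_surjective ι.injective
  refine ⟨fun j => if hj : j < m then ((Ordinal.ToType.mk (o := β)).symm
    (Function.invFun ι (Ordinal.ToType.mk (o := m) ⟨j, hj⟩)) : Iio β).1 else 0, ?_, ?_⟩
  · intro j
    beta_reduce
    by_cases hj : j < m
    · rw [dif_pos hj]
      exact ((Ordinal.ToType.mk (o := β)).symm _).2
    · rw [dif_neg hj]; exact hβ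
  · intro x hx
    beta_reduce
    obtain ⟨a, ha⟩ := hg ((Ordinal.ToType.mk (o := β)) ⟨x, hx⟩)
    refine ⟨((Ordinal.ToType.mk (o := m)).symm a).1, ((Ordinal.ToType.mk (o := m)).symm a).2, ?_⟩
    beta_reduce
    rw [dif_pos (show ((((Ordinal.ToType.mk (o := m)).symm a) : Iio m) : Ordinal) < m from ((Ordinal.ToType.mk (o := m)).symm a).2)]
    have : (⟨((Ordinal.ToType.mk (o := m)).symm a).1, ((Ordinal.ToType.mk (o := m)).symm a).2⟩ : Iio m)
        = (Ordinal.ToType.mk (o := m)).symm a := rfl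
    rw [this, OrderIso.apply_symm_apply, ha, OrderIso.symm_apply_apply]

theorem exists_esystem (μ : Cardinal.{0}) :
    ∃ e : Ordinal.{0} → Ordinal.{0} → Ordinal.{0},
      (∀ β, 0 < β → β.card ≤ μ → ∀ j, e β j < β) ∧
      (∀ β, 0 < β → β.card ≤ μ → ∀ x < β, ∃ j < μ.ord, e β j = x) := by
  have hsurj : ∀ β : Ordinal.{0}, 0 < β → β.card ≤ μ →
      ∃ f : Ordinal.{0} → Ordinal.{0}, (∀ j, f j < β) ∧ ∀ x < β, ∃ j < μ.ord, f j = x := by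
    intro β h1 h2
    exact exists_surj_onto (by rw [Cardinal.card_ord]; exact h2) h1
  refine ⟨fun β => if h : 0 < β ∧ β.card ≤ μ then Classical.choose (hsurj β h.1 h.2)
    else fun _ => 0, ?_, ?_⟩
  · intro β h1 h2 j
    beta_reduce
    rw [dif_pos (⟨h1, h2⟩ : 0 < β ∧ β.card ≤ μ)]
    exact (Classical.choose_spec (hsurj β h1 h2)).1 j
  · intro β h1 h2 x hx
    have hd : (fun β => if h : 0 < β ∧ β.card ≤ μ then Classical.choose (hsurj β h.1 h.2)
      else fun _ => (0:Ordinal.{0})) β = Classical.choose (hsurj β h1 h2) := by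
      beta_reduce
      rw [dif_pos (⟨h1, h2⟩ : 0 < β ∧ β.card ≤ μ)]
    rw [hd]
    exact (Classical.choose_spec (hsurj β h1 h2)).2 x hx

theorem type_Iio_lt (o : Ordinal.{0}) :
    Ordinal.type ((· < ·) : ↥(Iio o) → ↥(Iio o) → Prop) = Ordinal.lift.{1,0} o :=
  Ordinal.typein_ordinal o

theorem tau_lt {μ : Cardinal.{0}} (hμ : μ.IsRegular)
    (e : Ordinal.{0} → Ordinal.{0} → Ordinal.{0}) {J : Ordinal.{0}} (hJ : J < μ.ord)
    (δ : Ordinal.{0}) : posIn (Ps e J δ) δ < μ.ord := by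
  have hmlim : Order.IsSuccLimit μ.ord := Cardinal.isSuccLimit_ord hμ.aleph0_le
  have hρ : posIn (Eim e J δ) δ < μ.ord := by
    apply posIn_lt_ord
    have h1 : #(↥(Eim e J δ ∩ Iio δ)) ≤ #(↥(Eim e J δ)) :=
      Cardinal.mk_le_mk_of_subset Set.inter_subset_left
    have h2 : #(↥(Eim e J δ)) ≤ #(↥(Iio J)) := Cardinal.mk_image_le
    have h3 : #(↥(Iio J)) = Cardinal.lift.{1,0} J.card := Ordinal.mk_Iio_ordinal J
    have h4 : Cardinal.lift.{1,0} J.card < Cardinal.lift.{1,0} μ :=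
      Cardinal.lift_lt.mpr (Cardinal.lt_ord.mp hJ)
    exact lt_of_le_of_lt (h1.trans (h2.trans_eq h3)) h4
  have hle : posIn (Ps e J δ) δ ≤ posIn (Eim e J δ) δ + 1 := by
    apply posIn_le_of_mono (g := posIn (Eim e J δ))
    · intro x hx y hy hxy hyδ
      obtain ⟨x', hx'1, hx'2⟩ := hy.2.2 x hxy
      exact lt_of_le_of_lt (posIn_mono _ hx'2.le) (posIn_lt_posIn hx'1.1 hx'1.2)
    · intro x hx hxδ
      exact lt_of_le_of_lt (posIn_mono _ hxδ.le) (lt_add_one_self _)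
  exact lt_of_le_of_lt hle (succ_lt_of_limit hmlim hρ)



theorem good_exists {μ κ : Cardinal.{0}} (hμ : μ.IsRegular) (hκ : κ.IsRegular) (hκu : ℵ₀ < κ)
    (hκμ : κ < μ) (e : Ordinal.{0} → Ordinal.{0} → Ordinal.{0})
    (He1 : ∀ β, 0 < β → β.card ≤ μ → ∀ j, e β j < β)
    (He2 : ∀ β, 0 < β → β.card ≤ μ → ∀ x < β, ∃ j < μ.ord, e β j = x)
    {δ : Ordinal.{0}} (hδcard : δ.card ≤ μ) (hδcof : δ.cof = κ) :
    ∃ J < μ.ord, ∃ g : Ordinal.{0} → Ordinal.{0},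
      (∀ i < κ.ord, g i ∈ Ms e J δ ∧ g i ∈ Zs e J δ) ∧
      (∀ i < κ.ord, ∀ i' < κ.ord, i < i' → g i < g i') ∧
      (∀ b < δ, ∃ i < κ.ord, b < g i) := by
  have hℵκ : ℵ₀ ≤ κ := hκ.aleph0_le
  have hδlim : Order.IsSuccLimit δ := Ordinal.aleph0_le_cof.mp (by rw [hδcof]; exact hℵκ)
  have hδ0 : (0:Ordinal) < δ := hδlim.pos
  have hmlim : Order.IsSuccLimit μ.ord := Cardinal.isSuccLimit_ord hμ.aleph0_le
  have hmcof : (μ.ord).cof = μ := hμ.cof_eq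
  have hδcof' : ℵ₀ < δ.cof := by rw [hδcof]; exact hκu
  have hcard_lt : ∀ x < δ, x.card ≤ μ := fun x hx => (Ordinal.card_le_card hx.le).trans hδcard
  -- the index function
  set idx : Ordinal.{0} → Ordinal.{0} → Ordinal.{0} :=
    fun β x => sInf {j | j < μ.ord ∧ e β j = x} with hidx
  have hidx_spec : ∀ β, 0 < β → β.card ≤ μ → ∀ x < β, idx β x < μ.ord ∧ e β (idx β x) = x := by
    intro β h1 h2 x hx
    obtain ⟨j, hj1, hj2⟩ := He2 β h1 h2 x hx
    have hne : {j | j < μ.ord ∧ e β j = x}.Nonempty := ⟨j, hj1, hj2⟩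
    have := csInf_mem hne
    exact ⟨this.1, this.2⟩
  -- cofinal κ-family
  obtain ⟨fb, hfb⟩ := Ordinal.exists_blsub_cof δ
  set f : Ordinal.{0} → Ordinal.{0} := fun i => if h : i < (δ.cof).ord then fb i h else 0 with hf
  have hfδ : ∀ i < κ.ord, f i < δ := by
    intro i hi
    have hi' : i < (δ.cof).ord := by rw [hδcof]; exact hi
    rw [hf]
    beta_reduce
    rw [dif_pos hi']
    rw [← hfb]
    exact Ordinal.lt_blsub _ i hi'
  have hfcof : ∀ b < δ, ∃ i < κ.ord, b ≤ f i := by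
    intro b hb
    rw [← hfb] at hb
    obtain ⟨i, hi, hbi⟩ := Ordinal.lt_blsub_iff.mp hb
    have hik : i < κ.ord := by rw [← hδcof]; exact hi
    refine ⟨i, hik, ?_⟩
    have hfi : f i = fb i hi := by rw [hf]; beta_reduce; rw [dif_pos hi]
    rw [hfi]
    exact hbi
  -- covering index bound
  set j₀ : Ordinal.{0} := Ordinal.bsup.{0,0} κ.ord (fun i _ => idx δ (f i) + 1) with hj₀
  have hj₀m : j₀ < μ.ord := by
    rw [hj₀]
    apply Ordinal.bsup_lt_ord
    · rw [Cardinal.card_ord, hmcof]; exact hκμ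
    · intro i hi
      exact succ_lt_of_limit hmlim (hidx_spec δ hδ0 hδcard (f i) (hfδ i hi)).1
  have hcov : ∀ b < δ, ∃ x, x ∈ Eim e j₀ δ ∧ b < x ∧ x < δ := by
    intro b hb
    obtain ⟨i, hik, hbf⟩ := hfcof (b+1) (succ_lt_of_limit hδlim hb)
    have hspec := hidx_spec δ hδ0 hδcard (f i) (hfδ i hik)
    refine ⟨f i, ⟨idx δ (f i), ?_, hspec.2⟩, ?_, hfδ i hik⟩
    · exact lt_of_lt_of_le (lt_add_one_self _) (Ordinal.le_bsup _ i hik)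
    · exact lt_of_lt_of_le (lt_add_one_self b) hbf
  -- ω-limits of Eim j₀ elements above any bound
  have hclpt : ∀ b < δ, ∃ γ, b < γ ∧ γ < δ ∧
      (∀ b' < γ, ∃ x, x ∈ Eim e j₀ δ ∧ x < γ ∧ b' < x) := by
    intro b hb
    set y : ℕ → Ordinal.{0} := fun n => Nat.rec (Classical.choose (hcov b hb))
      (fun _ p => if hp : p < δ then Classical.choose (hcov p hp) else 0) n with hy
    have hy0 : y 0 = Classical.choose (hcov b hb) := rfl
    have hys : ∀ n, y (n+1) = if hp : y n < δ then Classical.choose (hcov (y n) hp) else 0 :=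
      fun n => rfl
    have hyspec : ∀ n, y n ∈ Eim e j₀ δ ∧ y n < δ ∧ y n < y (n+1) := by
      intro n
      induction n with
      | zero =>
        have h0 := Classical.choose_spec (hcov b hb)
        have hy0δ : y 0 < δ := by rw [hy0]; exact h0.2.2
        have hy1 : y 1 = Classical.choose (hcov (y 0) hy0δ) :=
          (hys 0).trans (dif_pos hy0δ)
        refine ⟨by rw [hy0]; exact h0.1, hy0δ, ?_⟩
        have h2 := (Classical.choose_spec (hcov (y 0) hy0δ)).2.1
        rw [← hy1] at h2
        exact h2
      | succ n ih =>
        have hyn1 : y (n+1) = Classical.choose (hcov (y n) ih.2.1) :=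
          (hys n).trans (dif_pos ih.2.1)
        have h1 := Classical.choose_spec (hcov (y n) ih.2.1)
        have hyn1δ : y (n+1) < δ := by rw [hyn1]; exact h1.2.2
        have hy2 : y (n+2) = Classical.choose (hcov (y (n+1)) hyn1δ) :=
          (hys (n+1)).trans (dif_pos hyn1δ)
        refine ⟨by rw [hyn1]; exact h1.1, hyn1δ, ?_⟩
        have h2 := (Classical.choose_spec (hcov (y (n+1)) hyn1δ)).2.1
        rw [← hy2] at h2
        exact h2
    set γ := (⨆ n, y n) with hγ
    have hγδ : γ < δ := by
      rw [hγ]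
      apply Ordinal.iSup_lt_ord
      · rw [Cardinal.mk_nat]; exact hδcof'
      · exact fun n => (hyspec n).2.1
    have hyγ : ∀ n, y n < γ := by
      intro n
      exact lt_of_lt_of_le (hyspec n).2.2 (by rw [hγ]; exact Ordinal.le_iSup y (n+1))
    refine ⟨γ, ?_, hγδ, ?_⟩
    · have : b < y 0 := by rw [hy0]; exact (Classical.choose_spec (hcov b hb)).2.1
      exact this.trans (hyγ 0)
    · intro b' hb'
      rw [hγ] at hb'
      obtain ⟨n, hn⟩ := (Ordinal.lt_iSup_iff).mp hb'
      exact ⟨y n, (hyspec n).1, hyγ n, hn⟩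
  -- the chain
  set g : Ordinal.{0} → Ordinal.{0} := lt_wf.fix (fun i rec =>
    if h : (max (f i) (Ordinal.bsup.{0,0} i (fun j hj => rec j hj + 1))) < δ
    then Classical.choose (hclpt _ h) else 0) with hg
  have hgdef : ∀ i, g i = if h : (max (f i) (Ordinal.bsup.{0,0} i (fun j _ => g j + 1))) < δ
      then Classical.choose (hclpt _ h) else 0 := by
    intro i
    conv_lhs => rw [hg, WellFounded.fix_eq]
  have hgkey : ∀ i < κ.ord, g i < δ ∧ f i < g i ∧
      (Ordinal.bsup.{0,0} i (fun j _ => g j + 1)) < g i ∧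
      (∀ b' < g i, ∃ x, x ∈ Eim e j₀ δ ∧ x < g i ∧ b' < x) := by
    intro i
    induction i using Ordinal.induction with
    | h i ih =>
      intro hik
      have hbsup : (Ordinal.bsup.{0,0} i (fun j _ => g j + 1)) < δ := by
        apply Ordinal.bsup_lt_ord
        · rw [hδcof]; exact Cardinal.lt_ord.mp hik
        · intro j hj
          exact succ_lt_of_limit hδlim (ih j hj (hj.trans hik)).1
      have hmax : (max (f i) (Ordinal.bsup.{0,0} i (fun j _ => g j + 1))) < δ :=
        max_lt (hfδ i hik) hbsup
      have hgi : g i = Classical.choose (hclpt _ hmax) := by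
        rw [hgdef i]; exact dif_pos hmax
      have hspec := Classical.choose_spec (hclpt _ hmax)
      refine ⟨by rw [hgi]; exact hspec.2.1, ?_, ?_, by rw [hgi]; exact hspec.2.2⟩
      · exact lt_of_le_of_lt (le_max_left _ _) (by rw [hgi]; exact hspec.1)
      · exact lt_of_le_of_lt (le_max_right _ _) (by rw [hgi]; exact hspec.1)
  have hgmono : ∀ i < κ.ord, ∀ i' < κ.ord, i < i' → g i < g i' := by
    intro i hi i' hi' hii'
    have h1 : g i + 1 ≤ Ordinal.bsup.{0,0} i' (fun j _ => g j + 1) :=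
      Ordinal.le_bsup (fun j (_ : j < i') => g j + 1) i hii'
    exact lt_of_lt_of_le ((lt_add_one_self (g i)).trans_le h1) (hgkey i' hi').2.2.1.le
  have hgcof : ∀ b < δ, ∃ i < κ.ord, b < g i := by
    intro b hb
    obtain ⟨i, hik, hbf⟩ := hfcof b hb
    exact ⟨i, hik, lt_of_le_of_lt hbf (hgkey i hik).2.1⟩
  have hg0 : ∀ i < κ.ord, 0 < g i := fun i hik =>
    lt_of_le_of_lt (zero_le : 0 ≤ f i) (hgkey i hik).2.1
  -- index transfer function
  set tr : Ordinal.{0} → Ordinal.{0} → Ordinal.{0} := fun i ξ =>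
    max (if e δ ξ < g i then idx (g i) (e δ ξ) else 0) (idx δ (e (g i) ξ)) with htr
  have htr_def : ∀ i ξ, tr i ξ =
      max (if e δ ξ < g i then idx (g i) (e δ ξ) else 0) (idx δ (e (g i) ξ)) := fun i ξ => rfl
  have htrm : ∀ i < κ.ord, ∀ ξ, tr i ξ < μ.ord := by
    intro i hik ξ
    rw [htr_def]
    apply max_lt
    · by_cases hc : e δ ξ < g i
      · rw [if_pos hc]
        exact (hidx_spec (g i) (hg0 i hik) (hcard_lt _ (hgkey i hik).1) _ hc).1
      · rw [if_neg hc]; exact hmlim.pos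
    · exact (hidx_spec δ hδ0 hδcard _
        ((He1 (g i) (hg0 i hik) (hcard_lt _ (hgkey i hik).1) ξ).trans (hgkey i hik).1)).1
  set JJ : ℕ → Ordinal.{0} := fun n => Nat.rec j₀ (fun _ p =>
    max (p + 1) (Ordinal.bsup.{0,0} κ.ord
      (fun i _ => Ordinal.bsup.{0,0} p (fun ξ _ => tr i ξ + 1)))) n with hJJ
  have hJJ0 : JJ 0 = j₀ := rfl
  have hJJs : ∀ n, JJ (n+1) = max (JJ n + 1) (Ordinal.bsup.{0,0} κ.ord
      (fun i _ => Ordinal.bsup.{0,0} (JJ n) (fun ξ _ => tr i ξ + 1))) := fun n => rfl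
  have hJJm : ∀ n, JJ n < μ.ord := by
    intro n
    induction n with
    | zero => exact hj₀m
    | succ n ih =>
      rw [hJJs n]
      apply max_lt (succ_lt_of_limit hmlim ih)
      apply Ordinal.bsup_lt_ord (by rw [Cardinal.card_ord, hmcof]; exact hκμ)
      intro i hi
      apply Ordinal.bsup_lt_ord (by rw [hmcof]; exact Cardinal.lt_ord.mp ih)
      intro ξ hξ
      exact succ_lt_of_limit hmlim (htrm i hi ξ)
  set J := (⨆ n, JJ n) with hJdef
  have hJm : J < μ.ord := by
    rw [hJdef]
    apply Ordinal.iSup_lt_ord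
    · rw [Cardinal.mk_nat, hmcof]; exact hκu.trans hκμ
    · exact hJJm
  have hj₀J : j₀ ≤ J := by
    rw [hJdef, ← hJJ0]
    exact Ordinal.le_iSup JJ 0
  have htrJ : ∀ i < κ.ord, ∀ ξ < J, tr i ξ < J := by
    intro i hik ξ hξ
    obtain ⟨n, hn⟩ := Ordinal.lt_iSup_iff.mp (by rw [← hJdef]; exact hξ)
    have h2 : tr i ξ + 1 ≤ Ordinal.bsup.{0,0} (JJ n) (fun ξ _ => tr i ξ + 1) :=
      Ordinal.le_bsup (fun ξ (_ : ξ < JJ n) => tr i ξ + 1) ξ hn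
    have h3 : Ordinal.bsup.{0,0} (JJ n) (fun ξ _ => tr i ξ + 1) ≤
        Ordinal.bsup.{0,0} κ.ord (fun i _ => Ordinal.bsup.{0,0} (JJ n) (fun ξ _ => tr i ξ + 1)) :=
      Ordinal.le_bsup _ i hik
    have h4 : tr i ξ < JJ (n+1) := by
      rw [hJJs n]
      exact lt_of_lt_of_le ((lt_add_one_self _).trans_le (h2.trans h3)) (le_max_right _ _)
    exact h4.trans_le (by rw [hJdef]; exact Ordinal.le_iSup JJ (n+1))
  have hmesh : ∀ i < κ.ord, Eim e J δ ∩ Iio (g i) = Eim e J (g i) := by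
    intro i hik
    have hgiδ : g i < δ := (hgkey i hik).1
    have hgi0 : 0 < g i := hg0 i hik
    have hgicard : (g i).card ≤ μ := hcard_lt _ hgiδ
    ext x
    constructor
    · rintro ⟨⟨ξ, hξJ, rfl⟩, hxgi⟩
      have hxgi' : e δ ξ < g i := hxgi
      have hidx2 := hidx_spec (g i) hgi0 hgicard (e δ ξ) hxgi'
      refine ⟨idx (g i) (e δ ξ), ?_, hidx2.2⟩
      have h1 : idx (g i) (e δ ξ) ≤ tr i ξ := by
        rw [htr_def, if_pos hxgi']
        exact le_max_left _ _
      exact lt_of_le_of_lt h1 (htrJ i hik ξ hξJ)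
    · rintro ⟨ξ, hξJ, rfl⟩
      have hval : e (g i) ξ < g i := He1 (g i) hgi0 hgicard ξ
      have hvalδ : e (g i) ξ < δ := hval.trans hgiδ
      have hidx2 := hidx_spec δ hδ0 hδcard (e (g i) ξ) hvalδ
      refine ⟨⟨idx δ (e (g i) ξ), ?_, hidx2.2⟩, hval⟩
      have h1 : idx δ (e (g i) ξ) ≤ tr i ξ := by
        rw [htr_def]
        exact le_max_right _ _
      exact lt_of_le_of_lt h1 (htrJ i hik ξ hξJ)
  refine ⟨J, hJm, g, ?_, hgmono, hgcof⟩
  intro i hik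
  refine ⟨⟨hg0 i hik, (hgkey i hik).1, hmesh i hik⟩, (hgkey i hik).1, ?_⟩
  intro b hb
  obtain ⟨x, hx1, hx2, hx3⟩ := (hgkey i hik).2.2.2 b hb
  obtain ⟨ξ, hξ, rfl⟩ := hx1
  exact ⟨e δ ξ, ⟨⟨ξ, lt_of_lt_of_le hξ hj₀J, rfl⟩, hx2⟩, hx3⟩

end
theorem stmt_11 (μ κ : Cardinal.{0})
    (hμ : μ.IsRegular) (hμu : ℵ₀ < μ)
    (hκ : κ.IsRegular) (hκu : ℵ₀ < κ) (hκμ : κ < μ) :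
    ∃ C : Ordinal.{0} → Set Ordinal.{0},
      (∀ α < (Order.succ μ).ord, C α ⊆ Set.Iio α ∧
        Ordinal.type (α := ↥(C α)) (· < ·) ≤ Ordinal.lift.{1,0} κ.ord) ∧
      (∀ α < (Order.succ μ).ord, ∀ β ∈ C α, C β = C α ∩ Set.Iio β) ∧
      IsStatIn {α : Ordinal.{0} | α < (Order.succ μ).ord ∧ α.cof = κ ∧ α = sSup (C α)}
        (Order.succ μ).ord := by
  have hνreg : (Order.succ μ).IsRegular := Cardinal.isRegular_succ hμ.aleph0_le
  set lam : Ordinal.{0} := (Order.succ μ).ord with hlam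
  have hlamlim : Order.IsSuccLimit lam := Cardinal.isSuccLimit_ord hνreg.aleph0_le
  have hlamcof : lam.cof = Order.succ μ := hνreg.cof_eq
  have hμν : μ < Order.succ μ := Order.lt_succ μ
  have hκν : κ < Order.succ μ := hκμ.trans hμν
  have hℵν : ℵ₀ < Order.succ μ := hμu.trans hμν
  have hmcard : (μ.ord).card = μ := Cardinal.card_ord μ
  have hklim : Order.IsSuccLimit κ.ord := Cardinal.isSuccLimit_ord hκ.aleph0_le
  have hcard : ∀ δ < lam, δ.card ≤ μ := fun δ h =>
    Order.lt_succ_iff.mp (Cardinal.lt_ord.mp h)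
  obtain ⟨e, He1, He2⟩ := exists_esystem μ
  set T : Set Ordinal.{0} := {δ | δ < lam ∧ δ.cof = κ} with hT
  have hTstat : IsStatIn T lam := by
    intro Cl hCl
    obtain ⟨p, hpCl, hplam, hpcof⟩ := exists_cof_point hκ hlamlim
      (by rw [hlamcof]; exact hκν) hCl
    exact ⟨p, ⟨hplam, hpcof⟩, hpCl⟩
  have hgood : ∀ δ ∈ T, ∃ J, J < μ.ord ∧ ∃ g : Ordinal.{0} → Ordinal.{0},
      (∀ i < κ.ord, g i ∈ Ms e J δ ∧ g i ∈ Zs e J δ) ∧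
      (∀ i < κ.ord, ∀ i' < κ.ord, i < i' → g i < g i') ∧
      (∀ b < δ, ∃ i < κ.ord, b < g i) := by
    intro δ hδ
    obtain ⟨J, hJ, hg⟩ := good_exists hμ hκ hκu hκμ e He1 He2 (hcard δ hδ.1) hδ.2
    exact ⟨J, hJ, hg⟩
  set F : Ordinal.{0} → Ordinal.{0} := fun δ =>
    if h : δ ∈ T then Classical.choose (hgood δ h) else 0 with hF
  have hFspec : ∀ δ, ∀ h : δ ∈ T, F δ < μ.ord ∧ ∃ g : Ordinal.{0} → Ordinal.{0},
      (∀ i < κ.ord, g i ∈ Ms e (F δ) δ ∧ g i ∈ Zs e (F δ) δ) ∧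
      (∀ i < κ.ord, ∀ i' < κ.ord, i < i' → g i < g i') ∧
      (∀ b < δ, ∃ i < κ.ord, b < g i) := by
    intro δ h
    have hFd : F δ = Classical.choose (hgood δ h) := by
      rw [hF]; beta_reduce; rw [dif_pos h]
    rw [hFd]
    exact Classical.choose_spec (hgood δ h)
  obtain ⟨Jstar, hJstar, hT0stat⟩ := stat_pigeon hlamlim
    (by rw [hlamcof, hmcard]; exact hμν) (by rw [hlamcof]; exact hℵν) hTstat F
    (fun δ h => (hFspec δ h).1)
  have hchain : ∀ δ ∈ {δ | δ ∈ T ∧ F δ = Jstar}, ∃ g : Ordinal.{0} → Ordinal.{0},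
      (∀ i < κ.ord, g i ∈ Ms e Jstar δ ∧ g i ∈ Zs e Jstar δ) ∧
      (∀ i < κ.ord, ∀ i' < κ.ord, i < i' → g i < g i') ∧
      (∀ b < δ, ∃ i < κ.ord, b < g i) := by
    intro δ hδ
    have h2 := (hFspec δ hδ.1).2
    rw [hδ.2] at h2
    exact h2
  set G : Ordinal.{0} → Ordinal.{0} → Ordinal.{0} := fun δ =>
    if h : δ ∈ {δ | δ ∈ T ∧ F δ = Jstar} then Classical.choose (hchain δ h)
    else fun _ => 0 with hG
  have hGspec : ∀ δ, ∀ h : δ ∈ {δ | δ ∈ T ∧ F δ = Jstar},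
      (∀ i < κ.ord, G δ i ∈ Ms e Jstar δ ∧ G δ i ∈ Zs e Jstar δ) ∧
      (∀ i < κ.ord, ∀ i' < κ.ord, i < i' → G δ i < G δ i') ∧
      (∀ b < δ, ∃ i < κ.ord, b < G δ i) := by
    intro δ h
    have hGd : G δ = Classical.choose (hchain δ h) := by
      rw [hG]; beta_reduce; rw [dif_pos h]
    rw [hGd]
    exact Classical.choose_spec (hchain δ h)
  have hGPs : ∀ δ, ∀ h : δ ∈ {δ | δ ∈ T ∧ F δ = Jstar}, ∀ i < κ.ord,
      G δ i ∈ Ps e Jstar δ := by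
    intro δ h i hi
    exact ⟨((hGspec δ h).1 i hi).1, ((hGspec δ h).1 i hi).2⟩
  obtain ⟨τstar, hτstar, hT1stat⟩ := stat_pigeon hlamlim
    (by rw [hlamcof, hmcard]; exact hμν) (by rw [hlamcof]; exact hℵν) hT0stat
    (fun δ => posIn (Ps e Jstar δ) δ) (fun δ _ => tau_lt hμ e hJstar δ)
  -- pick the master point
  obtain ⟨δs, hδsT1, _⟩ := hT1stat (Iio lam) (isClubIn_Iio hlamlim)
  have hδsT0 : δs ∈ {δ | δ ∈ T ∧ F δ = Jstar} := hδsT1.1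
  have hτδs : posIn (Ps e Jstar δs) δs = τstar := hδsT1.2
  set xhat : Ordinal.{0} → Ordinal.{0} := fun i => posIn (Ps e Jstar δs) (G δs i) with hxhat
  set Xstar : Set Ordinal.{0} := xhat '' (Iio κ.ord) with hXstar
  have hxmono : ∀ i < κ.ord, ∀ i' < κ.ord, i < i' → xhat i < xhat i' := by
    intro i hi i' hi' hii'
    exact posIn_lt_posIn (hGPs δs hδsT0 i hi) ((hGspec δs hδsT0).2.1 i hi i' hi' hii')
  have hXlt : ∀ q ∈ Xstar, q < τstar := by
    rintro q ⟨i, hi, rfl⟩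
    rw [← hτδs]
    exact posIn_lt_posIn (hGPs δs hδsT0 i hi) (((hGspec δs hδsT0).1 i hi).1.2.1)
  have hXcof : ∀ p < τstar, ∃ q ∈ Xstar, p < q := by
    intro p hp
    rw [← hτδs] at hp
    obtain ⟨γ, hγPs, hγδ, hγpos⟩ := posIn_realize hp
    obtain ⟨i, hi, hlt⟩ := (hGspec δs hδsT0).2.2 γ hγδ
    refine ⟨xhat i, ⟨i, hi, rfl⟩, ?_⟩
    rw [← hγpos]
    exact posIn_lt_posIn hγPs hlt
  refine ⟨Cs e Jstar Xstar, ?_, ?_, ?_⟩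
  · -- (1)
    intro α hα
    constructor
    · exact fun γ hγ => Ps_subset_Iio hγ.1
    · -- order type bound
      have hidx : ∀ γ : ↥(Cs e Jstar Xstar α),
          ∃ i, (i < κ.ord ∧ xhat i = posIn (Ps e Jstar α) γ.1) := by
        rintro ⟨γ, hγPs, hγX⟩
        obtain ⟨i, hi, hxi⟩ := hγX
        exact ⟨i, hi, hxi⟩
      choose ι hι1 hι2 using hidx
      have hmono : StrictMono (fun γ : ↥(Cs e Jstar Xstar α) => (⟨ι γ, hι1 γ⟩ : ↥(Iio κ.ord))) := by
        intro γ γ' hγγ'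
        have hlt : posIn (Ps e Jstar α) γ.1 < posIn (Ps e Jstar α) γ'.1 :=
          posIn_lt_posIn γ.2.1 hγγ'
        rw [← hι2 γ, ← hι2 γ'] at hlt
        have : ι γ < ι γ' := by
          by_contra hcon
          push_neg at hcon
          rcases lt_or_eq_of_le hcon with h | h
          · exact absurd (hxmono _ (hι1 γ') _ (hι1 γ) h) (lt_asymm hlt)
          · rw [h] at hlt; exact lt_irrefl _ hlt
        exact this
      rw [← type_Iio_lt]
      exact ((OrderEmbedding.ofStrictMono _ hmono).ltEmbedding).ordinal_type_le
  · -- (2)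
    intro α hα β hβ
    exact Cs_coherent hβ
  · -- (3)
    intro Cl hCl
    obtain ⟨δ, hδT1, hδCl⟩ := hT1stat Cl hCl
    have hδT0 : δ ∈ {δ | δ ∈ T ∧ F δ = Jstar} := hδT1.1
    have hδT : δ ∈ T := hδT0.1
    have hτδ : posIn (Ps e Jstar δ) δ = τstar := hδT1.2
    have hspec := hGspec δ hδT0
    have hbdd : BddAbove (Cs e Jstar Xstar δ) := ⟨δ, fun y hy => (Ps_subset_Iio hy.1).le⟩
    have hne : (Cs e Jstar Xstar δ).Nonempty := by
      have h0 : xhat 0 ∈ Xstar := ⟨0, hklim.pos, rfl⟩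
      have h1 : xhat 0 < τstar := hXlt _ h0
      rw [← hτδ] at h1
      obtain ⟨γ, hγPs, hγδ, hγpos⟩ := posIn_realize h1
      exact ⟨γ, hγPs, by rw [hγpos]; exact h0⟩
    refine ⟨δ, ⟨hδT.1, hδT.2, ?_⟩, hδCl⟩
    apply le_antisymm
    · -- δ ≤ sSup
      apply le_of_forall_lt
      intro b hb
      obtain ⟨i, hi, hbg⟩ := hspec.2.2 b hb
      have hp : posIn (Ps e Jstar δ) (G δ i) < τstar := by
        rw [← hτδ]
        exact posIn_lt_posIn (hGPs δ hδT0 i hi) ((hspec.1 i hi).1.2.1)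
      obtain ⟨q, hqX, hpq⟩ := hXcof _ hp
      have hq : q < τstar := hXlt q hqX
      rw [← hτδ] at hq
      obtain ⟨γ, hγPs, hγδ, hγpos⟩ := posIn_realize hq
      have hγC : γ ∈ Cs e Jstar Xstar δ := ⟨hγPs, by rw [hγpos]; exact hqX⟩
      have hγb : b < γ := by
        have : G δ i < γ := by
          by_contra hcon
          push_neg at hcon
          have := posIn_mono (Ps e Jstar δ) hcon
          rw [hγpos] at this
          exact absurd (lt_of_le_of_lt this hpq) (lt_irrefl _)
        exact hbg.trans this
      exact lt_of_lt_of_le hγb (le_csSup hbdd hγC)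
    · exact csSup_le hne (fun y hy => (Ps_subset_Iio hy.1).le)
end
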